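/- arXiv:2206.13290 — 3 statements merged into one kernel-verified Lean document; each statement's English description precedes it below -/
import Mathlib

section
/- (Lemma A.6) For Adam, under assumptions (S1)-(S3) and (A1)-(A2), suppose additionally that β_{1k} = β₁ ∈ (0,1) for all k, (α_k)_{k∈ℕ} is monotone decreasing, and Condition (M) holds. Then for all K ≥ 1 and all θ ∈ ℝ^d: (1/K)∑_{k=1}^K E[(θ_k − θ)ᵀ m_{k−1}] ≤ d D̃(θ)√M β̃_{1K}/(2β₁ α_K √(β̃_{2K}) K) + ((σ²/b + G²)/(2√(v_*) β₁ (1−β₁) K)) ∑_{k=1}^K α_k √(β̃_{2k}) + D(θ) G (1−β₁)/β₁. -/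
open MeasureTheory Filter Real

section helpers
lemma adam_abel (u w : ℕ → ℝ) (C : ℝ) (hu0 : ∀ k, 0 ≤ u k) (hum : ∀ k, u k ≤ u (k+1))
    (hw0 : ∀ k, 0 ≤ w k) (hwC : ∀ k, w k ≤ C) (K : ℕ) :
    ∑ k ∈ Finset.Icc 1 K, u k * (w k - w (k+1)) ≤ u K * (C - w (K+1)) := by
  induction K with
  | zero =>
    rw [Finset.Icc_eq_empty (by omega), Finset.sum_empty]
    nlinarith [hu0 0, hw0 1, hwC 1]
  | succ K ih =>
    rw [Finset.sum_Icc_succ_top (by omega : 1 ≤ K + 1)]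
    nlinarith [hu0 K, hum K, hw0 (K+1), hwC (K+1), hw0 (K+2), hwC (K+2), hu0 (K+1)]

lemma adam_point_id (s t u mm a bb : ℝ) (hs : s ≠ 0) (ha : a ≠ 0) (hb : bb ≠ 0) :
    (t - u) * mm = bb / (2*a) * (s*(t-u)^2 - s*(t - a / bb * (mm / s) - u)^2)
      + a / (2*bb) * (mm^2/s) := by
  field_simp
  ring

lemma euclid_normsq {d : ℕ} (x : EuclideanSpace ℝ (Fin d)) : ‖x‖^2 = ∑ i, (x i)^2 := by
  rw [EuclideanSpace.norm_eq, Real.sq_sqrt (by positivity)]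
  simp [sq_abs]

lemma euclid_abs_le {d : ℕ} (x : EuclideanSpace ℝ (Fin d)) (i : Fin d) : |x i| ≤ ‖x‖ := by
  have h : (x i)^2 ≤ ‖x‖^2 := by
    rw [euclid_normsq]
    exact Finset.single_le_sum (f := fun j => (x j)^2) (fun j _ => sq_nonneg _) (Finset.mem_univ i)
  calc |x i| = Real.sqrt ((x i)^2) := (Real.sqrt_sq_eq_abs _).symm
    _ ≤ Real.sqrt (‖x‖^2) := Real.sqrt_le_sqrt h
    _ = ‖x‖ := Real.sqrt_sq (norm_nonneg _)

lemma euclid_inner {d : ℕ} (x y : EuclideanSpace ℝ (Fin d)) : (inner ℝ x y : ℝ) = ∑ i, x i * y i := by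
  simp [PiLp.inner_apply, RCLike.inner_apply, conj_trivial, mul_comm]

lemma integrable_inner_bd {Ω : Type*} [MeasurableSpace Ω] (μ : Measure Ω) [IsProbabilityMeasure μ]
    {d : ℕ} (a c : Ω → EuclideanSpace ℝ (Fin d)) (ha : Measurable a) (hc : Measurable c)
    (Ca Cc : ℝ) (hCa : ∀ᵐ ω ∂μ, ‖a ω‖ ≤ Ca) (hCc : ∀ᵐ ω ∂μ, ‖c ω‖ ≤ Cc) :
    Integrable (fun ω => (inner ℝ (a ω) (c ω) : ℝ)) μ := by
  refine (memLp_top_of_bound ((Measurable.inner ha hc).aestronglyMeasurable) (Ca * Cc) ?_).integrable le_top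
  filter_upwards [hCa, hCc] with ω h1 h2
  calc ‖(inner ℝ (a ω) (c ω) : ℝ)‖ = |(inner ℝ (a ω) (c ω) : ℝ)| := rfl
    _ ≤ ‖a ω‖ * ‖c ω‖ := abs_real_inner_le_norm _ _
    _ ≤ Ca * Cc := mul_le_mul h1 h2 (norm_nonneg _) (le_trans (norm_nonneg _) h1)

lemma adam_orth {Ω : Type*} [MeasurableSpace Ω] (μ : Measure Ω) [IsProbabilityMeasure μ]
    {d : ℕ} (X g : Ω → EuclideanSpace ℝ (Fin d))
    (F ψ : EuclideanSpace ℝ (Fin d) → EuclideanSpace ℝ (Fin d))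
    (hX : Measurable X) (hg : Measurable g) (hF : Measurable F) (hψ : Measurable ψ)
    (Cg CF Cψ : ℝ)
    (hgbd : ∀ᵐ ω ∂μ, ‖g ω‖ ≤ Cg) (hFbd : ∀ᵐ ω ∂μ, ‖F (X ω)‖ ≤ CF)
    (hψbd : ∀ᵐ ω ∂μ, ‖ψ (X ω)‖ ≤ Cψ)
    (hunb : μ[g | MeasurableSpace.comap X inferInstance] =ᵐ[μ] fun ω => F (X ω)) :
    ∫ ω, (inner ℝ (ψ (X ω)) (g ω - F (X ω)) : ℝ) ∂μ = 0 := by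
  have hm' := hX.comap_le
  haveI : SigmaFinite (μ.trim hm') := inferInstance
  have hFX : Measurable (fun ω => F (X ω)) := hF.comp hX
  have hψX : Measurable (fun ω => ψ (X ω)) := hψ.comp hX
  have hh : Measurable (fun ω => g ω - F (X ω)) := hg.sub hFX
  have hhbd : ∀ᵐ ω ∂μ, ‖g ω - F (X ω)‖ ≤ Cg + CF := by
    filter_upwards [hgbd, hFbd] with ω h1 h2
    exact (norm_sub_le _ _).trans (by linarith)
  have hh_int : Integrable (fun ω => g ω - F (X ω)) μ :=
    (memLp_top_of_bound hh.aestronglyMeasurable _ hhbd).integrable le_top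
  have hg_int : Integrable g μ :=
    (memLp_top_of_bound hg.aestronglyMeasurable _ hgbd).integrable le_top
  have hFX_int : Integrable (fun ω => F (X ω)) μ :=
    (memLp_top_of_bound hFX.aestronglyMeasurable _ hFbd).integrable le_top
  have hhi_int : ∀ i : Fin d, Integrable (fun ω => (g ω - F (X ω)) i) μ := fun i =>
    (EuclideanSpace.proj (𝕜 := ℝ) i).integrable_comp hh_int
  have hcoord : ∀ i : Fin d, (fun _ => (0:ℝ)) =ᵐ[μ] μ[fun ω => (g ω - F (X ω)) i | MeasurableSpace.comap X inferInstance] := by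
    intro i
    refine ae_eq_condExp_of_forall_setIntegral_eq hm' (hhi_int i) (fun s _ _ => integrableOn_zero) ?_ ?_
    · intro s hs hμs
      have hsmeas : MeasurableSet s := hm' s hs
      have h1 : ∫ ω in s, (g ω - F (X ω)) i ∂μ
          = (EuclideanSpace.proj (𝕜 := ℝ) i) (∫ ω in s, (g ω - F (X ω)) ∂μ) :=
        (EuclideanSpace.proj (𝕜 := ℝ) i).integral_comp_comm hh_int.integrableOn
      have h2 : ∫ ω in s, (g ω - F (X ω)) ∂μ = 0 := by
        rw [integral_sub hg_int.integrableOn hFX_int.integrableOn]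
        have h3 : ∫ ω in s, g ω ∂μ = ∫ ω in s, (μ[g|MeasurableSpace.comap X inferInstance]) ω ∂μ :=
          (setIntegral_condExp hm' hg_int hs).symm
        have h4 : ∫ ω in s, (μ[g|MeasurableSpace.comap X inferInstance]) ω ∂μ = ∫ ω in s, F (X ω) ∂μ :=
          setIntegral_congr_ae hsmeas (hunb.mono fun ω h _ => h)
        rw [h3, h4, sub_self]
      rw [integral_zero, h1, h2, map_zero]
    · exact stronglyMeasurable_const.aestronglyMeasurable
  have key : ∀ i : Fin d, ∫ ω, ψ (X ω) i * (g ω - F (X ω)) i ∂μ = 0 := by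
    intro i
    have hψim : Measurable[MeasurableSpace.comap X inferInstance] (fun ω => ψ (X ω) i) :=
      (((measurable_pi_apply i).comp (WithLp.measurable_ofLp 2 _)).comp hψ).comp (comap_measurable X)
    have hψi : StronglyMeasurable[MeasurableSpace.comap X inferInstance] (fun ω => ψ (X ω) i) := hψim.stronglyMeasurable
    have hψibd : ∀ᵐ ω ∂μ, ‖ψ (X ω) i‖ ≤ Cψ := by
      filter_upwards [hψbd] with ω h1
      exact (euclid_abs_le _ i).trans h1
    have hprod_meas : Measurable (fun ω => ψ (X ω) i * (g ω - F (X ω)) i) :=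
      (((measurable_pi_apply i).comp (WithLp.measurable_ofLp 2 _)).comp hψX).mul (((measurable_pi_apply i).comp (WithLp.measurable_ofLp 2 _)).comp hh)
    have hprod_int : Integrable (fun ω => ψ (X ω) i * (g ω - F (X ω)) i) μ := by
      refine (memLp_top_of_bound hprod_meas.aestronglyMeasurable (Cψ * (Cg + CF)) ?_).integrable le_top
      filter_upwards [hψibd, hhbd] with ω h1 h2
      have h3 : |(g ω - F (X ω)) i| ≤ Cg + CF := (euclid_abs_le _ i).trans h2
      have h0 : (0:ℝ) ≤ Cg + CF := le_trans (abs_nonneg _) h3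
      calc ‖ψ (X ω) i * (g ω - F (X ω)) i‖ = |ψ (X ω) i| * |(g ω - F (X ω)) i| := by
            rw [Real.norm_eq_abs, abs_mul]
        _ ≤ Cψ * (Cg + CF) := mul_le_mul h1 h3 (abs_nonneg _) (le_trans (abs_nonneg _) h1)
    have step1 : ∫ ω, ψ (X ω) i * (g ω - F (X ω)) i ∂μ
        = ∫ ω, (μ[fun ω => ψ (X ω) i * (g ω - F (X ω)) i|MeasurableSpace.comap X inferInstance]) ω ∂μ :=
      (integral_condExp hm').symm
    have step2 : μ[fun ω => ψ (X ω) i * (g ω - F (X ω)) i|MeasurableSpace.comap X inferInstance]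
        =ᵐ[μ] fun ω => ψ (X ω) i * (μ[fun ω => (g ω - F (X ω)) i|MeasurableSpace.comap X inferInstance]) ω :=
      condExp_mul_of_stronglyMeasurable_left hψi hprod_int (hhi_int i)
    rw [step1, integral_congr_ae step2]
    have step3 : (fun ω => ψ (X ω) i * (μ[fun ω => (g ω - F (X ω)) i|MeasurableSpace.comap X inferInstance]) ω) =ᵐ[μ] fun _ => (0:ℝ) := by
      filter_upwards [hcoord i] with ω h1
      rw [← h1, mul_zero]
    rw [integral_congr_ae step3, integral_zero]
  have hinner : (fun ω => (inner ℝ (ψ (X ω)) (g ω - F (X ω)) : ℝ))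
      = fun ω => ∑ i, ψ (X ω) i * (g ω - F (X ω)) i := funext fun ω => euclid_inner _ _
  rw [hinner, integral_finset_sum]
  · exact Finset.sum_eq_zero fun i _ => key i
  · intro i _
    refine (memLp_top_of_bound ?_ (Cψ * (Cg + CF)) ?_).integrable le_top
    · exact ((((measurable_pi_apply i).comp (WithLp.measurable_ofLp 2 _)).comp hψX).mul (((measurable_pi_apply i).comp (WithLp.measurable_ofLp 2 _)).comp hh)).aestronglyMeasurable
    · filter_upwards [hψbd, hhbd] with ω h1 h2
      have h3 : |(g ω - F (X ω)) i| ≤ Cg + CF := (euclid_abs_le _ i).trans h2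
      have h1' : |ψ (X ω) i| ≤ Cψ := (euclid_abs_le _ i).trans h1
      calc ‖ψ (X ω) i * (g ω - F (X ω)) i‖ = |ψ (X ω) i| * |(g ω - F (X ω)) i| := by
            rw [Real.norm_eq_abs, abs_mul]
        _ ≤ Cψ * (Cg + CF) := mul_le_mul h1' h3 (abs_nonneg _) (le_trans (abs_nonneg _) h1')

lemma adam_orth' {Ω : Type*} [MeasurableSpace Ω] (μ : Measure Ω) [IsProbabilityMeasure μ]
    {d : ℕ} (X g : Ω → EuclideanSpace ℝ (Fin d))
    (F ψ : EuclideanSpace ℝ (Fin d) → EuclideanSpace ℝ (Fin d))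
    (hX : Measurable X) (hg : Measurable g) (hF : Measurable F) (hψ : Measurable ψ)
    (Cg CF Cψ : ℝ)
    (hgbd : ∀ᵐ ω ∂μ, ‖g ω‖ ≤ Cg) (hFbd : ∀ᵐ ω ∂μ, ‖F (X ω)‖ ≤ CF)
    (hψbd : ∀ᵐ ω ∂μ, ‖ψ (X ω)‖ ≤ Cψ)
    (hunb : μ[g | MeasurableSpace.comap X inferInstance] =ᵐ[μ] fun ω => F (X ω)) :
    ∫ ω, (inner ℝ (ψ (X ω)) (g ω) : ℝ) ∂μ = ∫ ω, (inner ℝ (ψ (X ω)) (F (X ω)) : ℝ) ∂μ := by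
  have h0 := adam_orth μ X g F ψ hX hg hF hψ Cg CF Cψ hgbd hFbd hψbd hunb
  have h1 : ∀ ω, (inner ℝ (ψ (X ω)) (g ω - F (X ω)) : ℝ)
      = (inner ℝ (ψ (X ω)) (g ω) : ℝ) - (inner ℝ (ψ (X ω)) (F (X ω)) : ℝ) := fun ω => inner_sub_right _ _ _
  have hi1 : Integrable (fun ω => (inner ℝ (ψ (X ω)) (g ω) : ℝ)) μ :=
    integrable_inner_bd μ _ _ (hψ.comp hX) hg Cψ Cg hψbd hgbd
  have hi2 : Integrable (fun ω => (inner ℝ (ψ (X ω)) (F (X ω)) : ℝ)) μ :=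
    integrable_inner_bd μ _ _ (hψ.comp hX) (hF.comp hX) Cψ CF hψbd hFbd
  have h2 : ∫ ω, ((inner ℝ (ψ (X ω)) (g ω) : ℝ) - (inner ℝ (ψ (X ω)) (F (X ω)) : ℝ)) ∂μ = 0 := by
    rw [← h0]; exact integral_congr_ae (Eventually.of_forall fun ω => (h1 ω).symm)
  rw [integral_sub hi1 hi2] at h2
  linarith
end helpers

set_option maxHeartbeats 1000000 in
theorem adam_lemmaA6
    {Ω : Type*} [MeasurableSpace Ω] (μ : Measure Ω) [IsProbabilityMeasure μ]
    {d : ℕ} (f : EuclideanSpace ℝ (Fin d) → ℝ)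
    (θ m mp v g dvec : ℕ → Ω → EuclideanSpace ℝ (Fin d))
    (vhat : ℕ → Ω → Fin d → ℝ)
    (α β1 β2 : ℕ → ℝ)
    (σ2 b G B M vstar : ℝ)
    (D : EuclideanSpace ℝ (Fin d) → ℝ)
    (hf : ContDiff ℝ 1 f)
    (hb : 0 < b) (hσ2 : 0 ≤ σ2) (hG : 0 < G) (hB : 0 < B)
    (hαpos : ∀ k, 0 < α k)
    (hmp0 : ∀ ω, mp 0 ω = 0)
    (hmrec : ∀ k ω, m k ω = β1 k • mp k ω + (1 - β1 k) • g k ω)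
    (hmpshift : ∀ k ω, mp (k+1) ω = m k ω)
    (hv0 : ∀ ω (i : Fin d), v 0 ω i = (1 - β2 0) * (g 0 ω i) ^ 2)
    (hvrec : ∀ k ω (i : Fin d), v (k+1) ω i = β2 (k+1) * v k ω i + (1 - β2 (k+1)) * (g (k+1) ω i) ^ 2)
    (hvhat : ∀ k ω (i : Fin d), vhat k ω i = v k ω i / (1 - (β2 k) ^ (k+1)))
    (hdvec : ∀ k ω (i : Fin d), dvec k ω i = -(m k ω i / (1 - (β1 k) ^ (k+1))) / Real.sqrt (vhat k ω i))
    (hθrec : ∀ k ω, θ (k+1) ω = θ k ω + α k • dvec k ω)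
    (hθmeas : ∀ k, Measurable (θ k)) (hgmeas : ∀ k, Measurable (g k))
    (hunbiased : ∀ k, μ[g k | MeasurableSpace.comap (θ k) inferInstance]
        =ᵐ[μ] fun ω => gradient f (θ k ω))
    (hvar : ∀ k, ∫ ω, ‖g k ω - gradient f (θ k ω)‖ ^ 2 ∂μ ≤ σ2 / b)
    (hGbd : ∀ k, ∀ᵐ ω ∂μ, ‖gradient f (θ k ω)‖ ≤ G)
    (hBbd : ∀ k, ∀ᵐ ω ∂μ, ‖g k ω‖ ≤ B)
    (hDpos : ∀ x, 0 < D x)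
    (hDbd : ∀ x k, ∀ᵐ ω ∂μ, ‖θ k ω - x‖ ≤ D x)
    (hM : ∀ k, ∀ᵐ ω ∂μ, ∀ i, (g k ω i) ^ 2 ≤ M)
    (hvstar : 0 < vstar)
    (hvstarle : ∀ k, ∀ᵐ ω ∂μ, ∀ i, vstar ≤ v k ω i)
    (hβ2mem : ∀ k, β2 k ∈ Set.Ico (0:ℝ) 1)
    (β1c : ℝ) (hβ1c : β1c ∈ Set.Ioo (0:ℝ) 1) (hβ1const : ∀ k, β1 k = β1c)
    (hαdec : ∀ k, α (k+1) ≤ α k)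
    (hmono : ∀ k (i : Fin d), ∀ᵐ ω ∂μ, vhat k ω i ≤ vhat (k+1) ω i)
    (Dtil : EuclideanSpace ℝ (Fin d) → ℝ)
    (hDtil : ∀ x k, ∀ᵐ ω ∂μ, ∀ i, (θ k ω i - x i) ^ 2 ≤ Dtil x)
    :
    ∀ (K : ℕ), 1 ≤ K → ∀ x : EuclideanSpace ℝ (Fin d),
      (1 / (K:ℝ)) * ∑ k ∈ Finset.Icc 1 K, ∫ ω, (inner ℝ (θ k ω - x) (mp k ω) : ℝ) ∂μ ≤
        (d:ℝ) * Dtil x * Real.sqrt M * (1 - β1c ^ (K+1)) / (2 * β1c * α K * Real.sqrt (1 - (β2 K) ^ (K+1)) * (K:ℝ))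
        + (σ2 / b + G ^ 2) / (2 * Real.sqrt vstar * β1c * (1 - β1c) * (K:ℝ)) * ∑ k ∈ Finset.Icc 1 K, α k * Real.sqrt (1 - (β2 k) ^ (k+1))
        + D x * G * ((1 - β1c) / β1c) := by
  intro K hK x
  obtain ⟨hβ0, hβ1'⟩ := hβ1c
  set V : ℝ := σ2 / b + G ^ 2 with hVdef
  have hV0 : 0 ≤ V := by positivity
  -- deterministic sequences
  set bt1 : ℕ → ℝ := fun k => 1 - β1c ^ (k+1) with hbt1def
  set bt2 : ℕ → ℝ := fun k => 1 - (β2 k) ^ (k+1) with hbt2def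
  have hbt1pos : ∀ k, 0 < bt1 k := fun k => by
    have : β1c ^ (k+1) < 1 := pow_lt_one₀ (le_of_lt hβ0) hβ1' (Nat.succ_ne_zero k)
    simp only [hbt1def]; linarith
  have hbt1le : ∀ k, bt1 k ≤ 1 := fun k => by
    have : 0 ≤ β1c ^ (k+1) := by positivity
    simp only [hbt1def]; linarith
  have hbt1ge : ∀ k, 1 - β1c ≤ bt1 k := fun k => by
    have : β1c ^ (k+1) ≤ β1c ^ 1 :=
      pow_le_pow_of_le_one (le_of_lt hβ0) (le_of_lt hβ1') (by omega)
    simp only [hbt1def, pow_one] at this ⊢; linarith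
  have hbt1mono : ∀ k, bt1 k ≤ bt1 (k+1) := fun k => by
    have : β1c ^ (k+1+1) ≤ β1c ^ (k+1) :=
      pow_le_pow_of_le_one (le_of_lt hβ0) (le_of_lt hβ1') (by omega)
    simp only [hbt1def]; linarith
  have hbt2pos : ∀ k, 0 < bt2 k := fun k => by
    have : (β2 k) ^ (k+1) < 1 := pow_lt_one₀ (hβ2mem k).1 (hβ2mem k).2 (Nat.succ_ne_zero k)
    simp only [hbt2def]; linarith
  have hbt2le : ∀ k, bt2 k ≤ 1 := fun k => by
    have : 0 ≤ (β2 k) ^ (k+1) := pow_nonneg (hβ2mem k).1 _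
    simp only [hbt2def]; linarith
  have hαanti : ∀ j k, j ≤ k → α k ≤ α j := fun j k hjk =>
    antitone_nat_of_succ_le hαdec hjk
  set γ : ℕ → ℝ := fun k => bt1 k / (2 * α k) with hγdef
  have hγpos : ∀ k, 0 < γ k := fun k => div_pos (hbt1pos k) (by linarith [hαpos k])
  have hγmono : ∀ k, γ k ≤ γ (k+1) := fun k => by
    apply div_le_div₀ (le_of_lt (hbt1pos (k+1))) (hbt1mono k) (by linarith [hαpos (k+1)])
    linarith [hαdec k]
  have hβne : β1c ≠ 0 := ne_of_gt hβ0
  have hbt1app : ∀ k, (1:ℝ) - β1c ^ (k+1) = bt1 k := fun k => by rw [hbt1def]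
  have hbt2app : ∀ k, (1:ℝ) - (β2 k) ^ (k+1) = bt2 k := fun k => by rw [hbt2def]
  -- measurability
  have hgradmeas : Measurable (gradient f) := by
    have h1 : Continuous (fderiv ℝ f) := hf.continuous_fderiv one_ne_zero
    have h2 : gradient f = fun y =>
        (InnerProductSpace.toDual ℝ (EuclideanSpace ℝ (Fin d))).symm (fderiv ℝ f y) := rfl
    rw [h2]
    exact ((InnerProductSpace.toDual ℝ _).symm.continuous.comp h1).measurable
  have hmm : ∀ k, Measurable (mp k) ∧ Measurable (m k) := by
    intro k
    induction k with
    | zero =>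
      have h0 : Measurable (mp 0) := by
        have h : mp 0 = fun _ => 0 := funext hmp0
        rw [h]; exact measurable_const
      refine ⟨h0, ?_⟩
      have h : m 0 = fun ω => β1 0 • mp 0 ω + (1 - β1 0) • g 0 ω := funext (hmrec 0)
      rw [h]
      exact (h0.const_smul (β1 0)).add ((hgmeas 0).const_smul (1 - β1 0))
    | succ k ih =>
      have h0 : Measurable (mp (k+1)) := by
        have h : mp (k+1) = m k := funext (hmpshift k)
        rw [h]; exact ih.2
      refine ⟨h0, ?_⟩
      have h : m (k+1) = fun ω => β1 (k+1) • mp (k+1) ω + (1 - β1 (k+1)) • g (k+1) ω :=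
        funext (hmrec (k+1))
      rw [h]
      exact (h0.const_smul (β1 (k+1))).add ((hgmeas (k+1)).const_smul (1 - β1 (k+1)))
  -- a.e. norm bounds on mp/m
  have hmtri : ∀ k ω, ‖m k ω‖ ≤ β1c * ‖mp k ω‖ + (1 - β1c) * ‖g k ω‖ := by
    intro k ω
    rw [hmrec k ω, hβ1const k]
    calc ‖β1c • mp k ω + (1 - β1c) • g k ω‖ ≤ ‖β1c • mp k ω‖ + ‖(1 - β1c) • g k ω‖ :=
          norm_add_le _ _
      _ = β1c * ‖mp k ω‖ + (1 - β1c) * ‖g k ω‖ := by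
          rw [norm_smul, norm_smul, Real.norm_eq_abs, Real.norm_eq_abs,
            abs_of_pos hβ0, abs_of_pos (by linarith : (0:ℝ) < 1 - β1c)]
  have hmbd : ∀ k, (∀ᵐ ω ∂μ, ‖mp k ω‖ ≤ B) ∧ (∀ᵐ ω ∂μ, ‖m k ω‖ ≤ B) := by
    have step : ∀ k, (∀ᵐ ω ∂μ, ‖mp k ω‖ ≤ B) → (∀ᵐ ω ∂μ, ‖m k ω‖ ≤ B) := by
      intro k h0
      filter_upwards [h0, hBbd k] with ω h1 h2
      calc ‖m k ω‖ ≤ β1c * ‖mp k ω‖ + (1 - β1c) * ‖g k ω‖ := hmtri k ω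
        _ ≤ β1c * B + (1 - β1c) * B := by
            have := norm_nonneg (mp k ω)
            have := norm_nonneg (g k ω)
            nlinarith
        _ = B := by ring
    intro k
    induction k with
    | zero =>
      have h0 : ∀ᵐ ω ∂μ, ‖mp 0 ω‖ ≤ B := Eventually.of_forall fun ω => by
        rw [hmp0]; simp [le_of_lt hB]
      exact ⟨h0, step 0 h0⟩
    | succ k ih =>
      have h0 : ∀ᵐ ω ∂μ, ‖mp (k+1) ω‖ ≤ B := by
        filter_upwards [ih.2] with ω h1
        rw [hmpshift k ω]; exact h1
      exact ⟨h0, step (k+1) h0⟩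
  -- second moment bounds
  have hFXmeas : ∀ k, Measurable (fun ω => gradient f (θ k ω)) := fun k =>
    hgradmeas.comp (hθmeas k)
  have hFint : ∀ k, Integrable (fun ω => ‖gradient f (θ k ω)‖^2) μ := by
    intro k
    refine (memLp_top_of_bound ((hFXmeas k).norm.pow measurable_const).aestronglyMeasurable
      (G^2) ?_).integrable le_top
    filter_upwards [hGbd k] with ω h1
    rw [Real.norm_eq_abs, abs_of_nonneg (by positivity)]
    exact pow_le_pow_left₀ (norm_nonneg _) h1 2
  have hdiffint : ∀ k, Integrable (fun ω => ‖g k ω - gradient f (θ k ω)‖^2) μ := by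
    intro k
    refine (memLp_top_of_bound (((hgmeas k).sub (hFXmeas k)).norm.pow
      measurable_const).aestronglyMeasurable ((B+G)^2) ?_).integrable le_top
    filter_upwards [hBbd k, hGbd k] with ω h1 h2
    rw [Real.norm_eq_abs, abs_of_nonneg (by positivity)]
    refine pow_le_pow_left₀ (norm_nonneg _) ((norm_sub_le _ _).trans (by linarith)) 2
  have hcrossint : ∀ k, Integrable
      (fun ω => (inner ℝ (gradient f (θ k ω)) (g k ω - gradient f (θ k ω)) : ℝ)) μ := fun k =>
    integrable_inner_bd μ (fun ω => gradient f (θ k ω)) (fun ω => g k ω - gradient f (θ k ω))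
      (hFXmeas k)
      ((hgmeas k).sub (hFXmeas k)) G (B+G) (hGbd k)
      (by filter_upwards [hBbd k, hGbd k] with ω h1 h2
          exact (norm_sub_le _ _).trans (by linarith))
  have hgsq : ∀ k, ∫ ω, ‖g k ω‖^2 ∂μ ≤ V := by
    intro k
    have hortho : ∫ ω, (inner ℝ (gradient f (θ k ω)) (g k ω - gradient f (θ k ω)) : ℝ) ∂μ = 0 :=
      adam_orth μ (θ k) (g k) (gradient f) (gradient f) (hθmeas k) (hgmeas k)
        hgradmeas hgradmeas B G G (hBbd k) (hGbd k) (hGbd k) (hunbiased k)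
    have hptw : ∀ ω, ‖g k ω‖^2 = ‖g k ω - gradient f (θ k ω)‖^2
        + 2 * (inner ℝ (gradient f (θ k ω)) (g k ω - gradient f (θ k ω)) : ℝ)
        + ‖gradient f (θ k ω)‖^2 := by
      intro ω
      have h1 := norm_add_sq_real (g k ω - gradient f (θ k ω)) (gradient f (θ k ω))
      rw [sub_add_cancel] at h1
      rw [h1, real_inner_comm]
    have heq : ∫ ω, ‖g k ω‖^2 ∂μ = (∫ ω, ‖g k ω - gradient f (θ k ω)‖^2 ∂μ)
        + 2 * (∫ ω, (inner ℝ (gradient f (θ k ω)) (g k ω - gradient f (θ k ω)) : ℝ) ∂μ)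
        + ∫ ω, ‖gradient f (θ k ω)‖^2 ∂μ := by
      have eB : ∫ ω, (‖g k ω - gradient f (θ k ω)‖^2
          + 2 * (inner ℝ (gradient f (θ k ω)) (g k ω - gradient f (θ k ω)) : ℝ)
          + ‖gradient f (θ k ω)‖^2) ∂μ
          = (∫ ω, (‖g k ω - gradient f (θ k ω)‖^2
              + 2 * (inner ℝ (gradient f (θ k ω)) (g k ω - gradient f (θ k ω)) : ℝ)) ∂μ)
            + ∫ ω, ‖gradient f (θ k ω)‖^2 ∂μ :=
        integral_add ((hdiffint k).add ((hcrossint k).const_mul 2)) (hFint k)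
      have eA : ∫ ω, (‖g k ω - gradient f (θ k ω)‖^2
          + 2 * (inner ℝ (gradient f (θ k ω)) (g k ω - gradient f (θ k ω)) : ℝ)) ∂μ
          = (∫ ω, ‖g k ω - gradient f (θ k ω)‖^2 ∂μ)
            + ∫ ω, 2 * (inner ℝ (gradient f (θ k ω)) (g k ω - gradient f (θ k ω)) : ℝ) ∂μ :=
        integral_add (hdiffint k) ((hcrossint k).const_mul 2)
      have eC : ∫ ω, 2 * (inner ℝ (gradient f (θ k ω)) (g k ω - gradient f (θ k ω)) : ℝ) ∂μ
          = 2 * ∫ ω, (inner ℝ (gradient f (θ k ω)) (g k ω - gradient f (θ k ω)) : ℝ) ∂μ :=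
        integral_const_mul 2 _
      calc ∫ ω, ‖g k ω‖^2 ∂μ = _ := integral_congr_ae (Eventually.of_forall fun ω => hptw ω)
        _ = _ := eB
        _ = _ := by rw [eA, eC]
    have hF2 : ∫ ω, ‖gradient f (θ k ω)‖^2 ∂μ ≤ G^2 := by
      have : ∫ ω, (G^2 : ℝ) ∂μ = G^2 := by simp
      rw [← this]
      refine integral_mono_ae (hFint k) (integrable_const _) ?_
      filter_upwards [hGbd k] with ω h1
      exact pow_le_pow_left₀ (norm_nonneg _) h1 2
    rw [heq, hortho]
    have := hvar k
    rw [hVdef]; linarith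
  have hgsqint : ∀ k, Integrable (fun ω => ‖g k ω‖^2) μ := by
    intro k
    refine (memLp_top_of_bound ((hgmeas k).norm.pow measurable_const).aestronglyMeasurable
      (B^2) ?_).integrable le_top
    filter_upwards [hBbd k] with ω h1
    rw [Real.norm_eq_abs, abs_of_nonneg (by positivity)]
    exact pow_le_pow_left₀ (norm_nonneg _) h1 2
  have hmpsqint : ∀ k, Integrable (fun ω => ‖mp k ω‖^2) μ := by
    intro k
    refine (memLp_top_of_bound ((hmm k).1.norm.pow measurable_const).aestronglyMeasurable
      (B^2) ?_).integrable le_top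
    filter_upwards [(hmbd k).1] with ω h1
    rw [Real.norm_eq_abs, abs_of_nonneg (by positivity)]
    exact pow_le_pow_left₀ (norm_nonneg _) h1 2
  have hmsqint : ∀ k, Integrable (fun ω => ‖m k ω‖^2) μ := by
    intro k
    refine (memLp_top_of_bound ((hmm k).2.norm.pow measurable_const).aestronglyMeasurable
      (B^2) ?_).integrable le_top
    filter_upwards [(hmbd k).2] with ω h1
    rw [Real.norm_eq_abs, abs_of_nonneg (by positivity)]
    exact pow_le_pow_left₀ (norm_nonneg _) h1 2
  have hmsq : ∀ k, (∫ ω, ‖mp k ω‖^2 ∂μ ≤ V) ∧ (∫ ω, ‖m k ω‖^2 ∂μ ≤ V) := by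
    have step : ∀ k, (∫ ω, ‖mp k ω‖^2 ∂μ ≤ V) → (∫ ω, ‖m k ω‖^2 ∂μ ≤ V) := by
      intro k h0
      have hptw : ∀ ω, ‖m k ω‖^2 ≤ β1c * ‖mp k ω‖^2 + (1-β1c) * ‖g k ω‖^2 := by
        intro ω
        have h1 := hmtri k ω
        have h2 := norm_nonneg (mp k ω)
        have h3 := norm_nonneg (g k ω)
        have h4 := norm_nonneg (m k ω)
        have h6 : (β1c * ‖mp k ω‖ + (1-β1c) * ‖g k ω‖)^2
            ≤ β1c * ‖mp k ω‖^2 + (1-β1c) * ‖g k ω‖^2 := by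
          nlinarith [mul_nonneg (mul_nonneg hβ0.le (by linarith : (0:ℝ) ≤ 1 - β1c))
            (sq_nonneg (‖mp k ω‖ - ‖g k ω‖))]
        calc ‖m k ω‖^2 ≤ (β1c * ‖mp k ω‖ + (1-β1c) * ‖g k ω‖)^2 :=
              pow_le_pow_left₀ h4 h1 2
          _ ≤ _ := h6
      have h5 : ∫ ω, ‖m k ω‖^2 ∂μ ≤ ∫ ω, (β1c * ‖mp k ω‖^2 + (1-β1c) * ‖g k ω‖^2) ∂μ :=
        integral_mono_ae (hmsqint k) (((hmpsqint k).const_mul _).add ((hgsqint k).const_mul _))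
          (Eventually.of_forall hptw)
      rw [integral_add ((hmpsqint k).const_mul _) ((hgsqint k).const_mul _),
        integral_const_mul, integral_const_mul] at h5
      have h6 := hgsq k
      nlinarith
    intro k
    induction k with
    | zero =>
      have h0 : ∫ ω, ‖mp 0 ω‖^2 ∂μ ≤ V := by
        have h : (fun ω => ‖mp 0 ω‖^2) = fun _ => (0:ℝ) := funext fun ω => by
          rw [hmp0]; simp
        rw [h, integral_zero]; exact hV0
      exact ⟨h0, step 0 h0⟩
    | succ k ih =>
      have h0 : ∫ ω, ‖mp (k+1) ω‖^2 ∂μ ≤ V := by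
        have h : (fun ω => ‖mp (k+1) ω‖^2) = fun ω => ‖m k ω‖^2 := funext fun ω => by
          rw [hmpshift k ω]
        rw [h]; exact ih.2
      exact ⟨h0, step (k+1) h0⟩
  -- inner product with gradient lower bound
  have hinner_g : ∀ k, -(D x * G) ≤ ∫ ω, (inner ℝ (θ k ω - x) (g k ω) : ℝ) ∂μ := by
    intro k
    have hψmeas : Measurable (fun y : EuclideanSpace ℝ (Fin d) => y - x) :=
      measurable_id.sub_const x
    have heq : ∫ ω, (inner ℝ (θ k ω - x) (g k ω) : ℝ) ∂μ
        = ∫ ω, (inner ℝ (θ k ω - x) (gradient f (θ k ω)) : ℝ) ∂μ :=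
      adam_orth' μ (θ k) (g k) (gradient f) (fun y => y - x) (hθmeas k) (hgmeas k)
        hgradmeas hψmeas B G (D x) (hBbd k) (hGbd k) (hDbd x k) (hunbiased k)
    rw [heq]
    have hconst : ∫ ω, (-(D x * G) : ℝ) ∂μ = -(D x * G) := by simp
    rw [← hconst]
    refine integral_mono_ae (integrable_const _)
      (integrable_inner_bd μ (fun ω => θ k ω - x) (fun ω => gradient f (θ k ω))
        ((hθmeas k).sub_const x) (hFXmeas k)
        (D x) G (hDbd x k) (hGbd k)) ?_
    filter_upwards [hDbd x k, hGbd k] with ω h1 h2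
    have h3 : |(inner ℝ (θ k ω - x) (gradient f (θ k ω)) : ℝ)| ≤ D x * G := by
      calc |(inner ℝ (θ k ω - x) (gradient f (θ k ω)) : ℝ)| ≤ ‖θ k ω - x‖ * ‖gradient f (θ k ω)‖ :=
            abs_real_inner_le_norm _ _
        _ ≤ D x * G := mul_le_mul h1 h2 (norm_nonneg _) (le_trans (norm_nonneg _) h1)
    linarith [neg_abs_le (inner ℝ (θ k ω - x) (gradient f (θ k ω)) : ℝ)]
  set c1 : ℕ → ℝ := fun k => α k * Real.sqrt (bt2 k) / (2 * β1c * bt1 k * Real.sqrt vstar) with hc1def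
  set c2 : ℝ := (1 - β1c)/β1c with hc2def
  set T' : ℝ := (d:ℝ) * Dtil x * Real.sqrt M * γ K / (β1c * Real.sqrt (bt2 K)) with hT'def
  have master : ∀ᵐ ω ∂μ,
      (∑ k ∈ Finset.Icc 1 K, (inner ℝ (θ k ω - x) (mp k ω) : ℝ))
        ≤ T' + ∑ k ∈ Finset.Icc 1 K,
            (c1 k * ‖m k ω‖^2 - c2 * (inner ℝ (θ k ω - x) (g k ω) : ℝ)) := by
    have hMae : ∀ᵐ ω ∂μ, ∀ k, ∀ i, (g k ω i)^2 ≤ M := ae_all_iff.2 hM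
    have hvsae : ∀ᵐ ω ∂μ, ∀ k, ∀ i, vstar ≤ v k ω i := ae_all_iff.2 hvstarle
    have hmnae : ∀ᵐ ω ∂μ, ∀ k, ∀ i, vhat k ω i ≤ vhat (k+1) ω i :=
      ae_all_iff.2 fun k => ae_all_iff.2 fun i => hmono k i
    have hDtae : ∀ᵐ ω ∂μ, ∀ k, ∀ i, (θ k ω i - x i)^2 ≤ Dtil x := ae_all_iff.2 (hDtil x)
    filter_upwards [hMae, hvsae, hmnae, hDtae] with ω hMg hvs hmn hDt
    have hvM : ∀ k i, v k ω i ≤ M := by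
      intro k
      induction k with
      | zero =>
        intro i
        rw [hv0 ω i]
        calc (1 - β2 0) * (g 0 ω i)^2 ≤ 1 * (g 0 ω i)^2 :=
              mul_le_mul_of_nonneg_right (by linarith [(hβ2mem 0).1]) (sq_nonneg _)
          _ = (g 0 ω i)^2 := one_mul _
          _ ≤ M := hMg 0 i
      | succ k ih =>
        intro i
        rw [hvrec k ω i]
        calc β2 (k+1) * v k ω i + (1 - β2 (k+1)) * (g (k+1) ω i)^2
            ≤ β2 (k+1) * M + (1 - β2 (k+1)) * M :=
              add_le_add (mul_le_mul_of_nonneg_left (ih i) (hβ2mem (k+1)).1)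
                (mul_le_mul_of_nonneg_left (hMg (k+1) i) (by linarith [(hβ2mem (k+1)).2]))
          _ = M := by ring
    have hM0 : ∀ _i : Fin d, 0 ≤ M := fun i => le_trans (sq_nonneg _) (hMg 0 i)
    have hvhat_pos : ∀ k i, 0 < vhat k ω i := by
      intro k i
      rw [hvhat k ω i, hbt2app k]
      exact div_pos (lt_of_lt_of_le hvstar (hvs k i)) (hbt2pos k)
    have hs_pos : ∀ k i, 0 < Real.sqrt (vhat k ω i) := fun k i => Real.sqrt_pos.2 (hvhat_pos k i)
    have hvhat_lb : ∀ k i, Real.sqrt vstar / Real.sqrt (bt2 k) ≤ Real.sqrt (vhat k ω i) := by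
      intro k i
      rw [← Real.sqrt_div hvstar.le]
      apply Real.sqrt_le_sqrt
      rw [hvhat k ω i, hbt2app k]
      exact (div_le_div_iff_of_pos_right (hbt2pos k)).2 (hvs k i)
    have hvhat_ub : ∀ k i, Real.sqrt (vhat k ω i) ≤ Real.sqrt M / Real.sqrt (bt2 k) := by
      intro k i
      rw [← Real.sqrt_div (hM0 i)]
      apply Real.sqrt_le_sqrt
      rw [hvhat k ω i, hbt2app k]
      exact (div_le_div_iff_of_pos_right (hbt2pos k)).2 (hvM k i)
    have hupd : ∀ k i, θ (k+1) ω i = θ k ω i - (α k / bt1 k) * (m k ω i / Real.sqrt (vhat k ω i)) := by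
      intro k i
      have h1 : θ (k+1) ω i = θ k ω i + α k * dvec k ω i := by
        rw [hθrec k ω]; rfl
      rw [h1, hdvec k ω i, hβ1const k, hbt1app k]
      ring
    have hid : ∀ k, (inner ℝ (θ k ω - x) (m k ω) : ℝ)
        = γ k * ((∑ i, Real.sqrt (vhat k ω i) * (θ k ω i - x i)^2) - ∑ i, Real.sqrt (vhat k ω i) * (θ (k+1) ω i - x i)^2)
          + (α k / (2 * bt1 k)) * ∑ i, (m k ω i)^2 / Real.sqrt (vhat k ω i) := by
      intro k
      rw [euclid_inner, ← Finset.sum_sub_distrib, Finset.mul_sum, Finset.mul_sum,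
        ← Finset.sum_add_distrib]
      refine Finset.sum_congr rfl fun i _ => ?_
      have hsub : (θ k ω - x) i = θ k ω i - x i := rfl
      have hs := hs_pos k i
      have hsne : Real.sqrt (vhat k ω i) ≠ 0 := ne_of_gt hs
      have hαne : α k ≠ 0 := ne_of_gt (hαpos k)
      have hbne : bt1 k ≠ 0 := ne_of_gt (hbt1pos k)
      have hγk : γ k = bt1 k / (2 * α k) := by rw [hγdef]
      rw [hsub, hupd k i, hγk]
      linear_combination adam_point_id (Real.sqrt (vhat k ω i)) (θ k ω i) (x i) (m k ω i) (α k) (bt1 k)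
        hsne hαne hbne
    have habel : ∑ k ∈ Finset.Icc 1 K, γ k * ((∑ i, Real.sqrt (vhat k ω i) * (θ k ω i - x i)^2) - ∑ i, Real.sqrt (vhat k ω i) * (θ (k+1) ω i - x i)^2)
        ≤ (d:ℝ) * (Dtil x * (γ K * (Real.sqrt M / Real.sqrt (bt2 K)))) := by
      have hswap : ∀ k, γ k * ((∑ i, Real.sqrt (vhat k ω i) * (θ k ω i - x i)^2) - ∑ i, Real.sqrt (vhat k ω i) * (θ (k+1) ω i - x i)^2)
          = ∑ i, (γ k * Real.sqrt (vhat k ω i)) * ((θ k ω i - x i)^2 - (θ (k+1) ω i - x i)^2) := by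
        intro k
        rw [← Finset.sum_sub_distrib, Finset.mul_sum]
        exact Finset.sum_congr rfl fun i _ => by ring
      calc ∑ k ∈ Finset.Icc 1 K, γ k * ((∑ i, Real.sqrt (vhat k ω i) * (θ k ω i - x i)^2) - ∑ i, Real.sqrt (vhat k ω i) * (θ (k+1) ω i - x i)^2)
          = ∑ k ∈ Finset.Icc 1 K, ∑ i, (γ k * Real.sqrt (vhat k ω i)) * ((θ k ω i - x i)^2 - (θ (k+1) ω i - x i)^2) :=
            Finset.sum_congr rfl fun k _ => hswap k
        _ = ∑ i, ∑ k ∈ Finset.Icc 1 K, (γ k * Real.sqrt (vhat k ω i)) * ((θ k ω i - x i)^2 - (θ (k+1) ω i - x i)^2) :=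
            Finset.sum_comm
        _ ≤ ∑ _i : Fin d, Dtil x * (γ K * (Real.sqrt M / Real.sqrt (bt2 K))) := by
            apply Finset.sum_le_sum
            intro i _
            have hfin := adam_abel (fun k => γ k * Real.sqrt (vhat k ω i))
              (fun k => (θ k ω i - x i)^2) (Dtil x)
              (fun k => mul_nonneg (hγpos k).le (Real.sqrt_nonneg _))
              (fun k => mul_le_mul (hγmono k) (Real.sqrt_le_sqrt (hmn k i)) (Real.sqrt_nonneg _) (hγpos (k+1)).le)
              (fun k => sq_nonneg _) (fun k => hDt k i) K
            have h2 : (γ K * Real.sqrt (vhat K ω i)) * (Dtil x - (θ (K+1) ω i - x i)^2)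
                ≤ (γ K * Real.sqrt (vhat K ω i)) * Dtil x := by
              have h5 := sq_nonneg (θ (K+1) ω i - x i)
              nlinarith [mul_nonneg (hγpos K).le (Real.sqrt_nonneg (vhat K ω i))]
            have hDt0 : 0 ≤ Dtil x := le_trans (sq_nonneg _) (hDt 0 i)
            have h3 : (γ K * Real.sqrt (vhat K ω i)) * Dtil x
                ≤ (γ K * (Real.sqrt M / Real.sqrt (bt2 K))) * Dtil x := by
              apply mul_le_mul_of_nonneg_right _ hDt0
              exact mul_le_mul_of_nonneg_left (hvhat_ub K i) (hγpos K).le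
            calc ∑ k ∈ Finset.Icc 1 K, (γ k * Real.sqrt (vhat k ω i)) * ((θ k ω i - x i)^2 - (θ (k+1) ω i - x i)^2)
                ≤ (γ K * Real.sqrt (vhat K ω i)) * (Dtil x - (θ (K+1) ω i - x i)^2) := hfin
              _ ≤ (γ K * Real.sqrt (vhat K ω i)) * Dtil x := h2
              _ ≤ (γ K * (Real.sqrt M / Real.sqrt (bt2 K))) * Dtil x := h3
              _ = Dtil x * (γ K * (Real.sqrt M / Real.sqrt (bt2 K))) := by ring
        _ = (d:ℝ) * (Dtil x * (γ K * (Real.sqrt M / Real.sqrt (bt2 K)))) := by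
            rw [Finset.sum_const, Finset.card_univ, Fintype.card_fin, nsmul_eq_mul]
    have hmp_eq : ∀ k, (inner ℝ (θ k ω - x) (mp k ω) : ℝ)
        = (1/β1c) * (inner ℝ (θ k ω - x) (m k ω) : ℝ) - c2 * (inner ℝ (θ k ω - x) (g k ω) : ℝ) := by
      intro k
      have h1 : (inner ℝ (θ k ω - x) (m k ω) : ℝ)
          = β1c * (inner ℝ (θ k ω - x) (mp k ω) : ℝ) + (1 - β1c) * (inner ℝ (θ k ω - x) (g k ω) : ℝ) := by
        rw [hmrec k ω, hβ1const k, inner_add_right, real_inner_smul_right, real_inner_smul_right]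
      rw [hc2def, h1]
      field_simp
      ring
    have hCbd : ∀ k, (1/β1c) * ((α k / (2 * bt1 k)) * ∑ i, (m k ω i)^2 / Real.sqrt (vhat k ω i))
        ≤ c1 k * ‖m k ω‖^2 := by
      intro k
      have h1 : ∑ i, (m k ω i)^2 / Real.sqrt (vhat k ω i)
          ≤ ∑ i, (m k ω i)^2 * (Real.sqrt (bt2 k) / Real.sqrt vstar) := by
        apply Finset.sum_le_sum
        intro i _
        rw [div_eq_mul_inv]
        apply mul_le_mul_of_nonneg_left _ (sq_nonneg _)
        have hpos : 0 < Real.sqrt vstar / Real.sqrt (bt2 k) :=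
          div_pos (Real.sqrt_pos.2 hvstar) (Real.sqrt_pos.2 (hbt2pos k))
        calc (Real.sqrt (vhat k ω i))⁻¹ ≤ (Real.sqrt vstar / Real.sqrt (bt2 k))⁻¹ :=
              inv_anti₀ hpos (hvhat_lb k i)
          _ = Real.sqrt (bt2 k) / Real.sqrt vstar := by rw [inv_div]
      have h2 : (0:ℝ) ≤ (1/β1c) * (α k / (2 * bt1 k)) := by
        apply mul_nonneg (by positivity)
        exact div_nonneg (hαpos k).le (by linarith [hbt1pos k])
      calc (1/β1c) * ((α k / (2 * bt1 k)) * ∑ i, (m k ω i)^2 / Real.sqrt (vhat k ω i))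
          = ((1/β1c) * (α k / (2 * bt1 k))) * ∑ i, (m k ω i)^2 / Real.sqrt (vhat k ω i) := by ring
        _ ≤ ((1/β1c) * (α k / (2 * bt1 k))) * ∑ i, (m k ω i)^2 * (Real.sqrt (bt2 k) / Real.sqrt vstar) :=
            mul_le_mul_of_nonneg_left h1 h2
        _ = c1 k * ‖m k ω‖^2 := by
            rw [← Finset.sum_mul, ← euclid_normsq, hc1def]
            have h6 : Real.sqrt vstar ≠ 0 := ne_of_gt (Real.sqrt_pos.2 hvstar)
            have h7 : bt1 k ≠ 0 := ne_of_gt (hbt1pos k)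
            field_simp
    have hper : ∀ k ∈ Finset.Icc 1 K, (inner ℝ (θ k ω - x) (mp k ω) : ℝ)
        ≤ (1/β1c) * (γ k * ((∑ i, Real.sqrt (vhat k ω i) * (θ k ω i - x i)^2) - ∑ i, Real.sqrt (vhat k ω i) * (θ (k+1) ω i - x i)^2))
          + (c1 k * ‖m k ω‖^2 - c2 * (inner ℝ (θ k ω - x) (g k ω) : ℝ)) := by
      intro k _
      rw [hmp_eq k, hid k, mul_add]
      linarith [hCbd k]
    calc ∑ k ∈ Finset.Icc 1 K, (inner ℝ (θ k ω - x) (mp k ω) : ℝ)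
        ≤ ∑ k ∈ Finset.Icc 1 K, ((1/β1c) * (γ k * ((∑ i, Real.sqrt (vhat k ω i) * (θ k ω i - x i)^2) - ∑ i, Real.sqrt (vhat k ω i) * (θ (k+1) ω i - x i)^2))
            + (c1 k * ‖m k ω‖^2 - c2 * (inner ℝ (θ k ω - x) (g k ω) : ℝ))) :=
          Finset.sum_le_sum hper
      _ = (1/β1c) * (∑ k ∈ Finset.Icc 1 K, γ k * ((∑ i, Real.sqrt (vhat k ω i) * (θ k ω i - x i)^2) - ∑ i, Real.sqrt (vhat k ω i) * (θ (k+1) ω i - x i)^2))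
          + ∑ k ∈ Finset.Icc 1 K, (c1 k * ‖m k ω‖^2 - c2 * (inner ℝ (θ k ω - x) (g k ω) : ℝ)) := by
          rw [Finset.sum_add_distrib, Finset.mul_sum]
      _ ≤ T' + ∑ k ∈ Finset.Icc 1 K, (c1 k * ‖m k ω‖^2 - c2 * (inner ℝ (θ k ω - x) (g k ω) : ℝ)) := by
          apply add_le_add_left
          have h4 : (0:ℝ) ≤ 1/β1c := by positivity
          calc (1/β1c) * (∑ k ∈ Finset.Icc 1 K, γ k * ((∑ i, Real.sqrt (vhat k ω i) * (θ k ω i - x i)^2) - ∑ i, Real.sqrt (vhat k ω i) * (θ (k+1) ω i - x i)^2))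
              ≤ (1/β1c) * ((d:ℝ) * (Dtil x * (γ K * (Real.sqrt M / Real.sqrt (bt2 K))))) :=
                mul_le_mul_of_nonneg_left habel h4
            _ = T' := by
                rw [hT'def]
                have h8 : Real.sqrt (bt2 K) ≠ 0 := ne_of_gt (Real.sqrt_pos.2 (hbt2pos K))
                field_simp
  -- integrability of per-k functions
  have hint_mp : ∀ k, Integrable (fun ω => (inner ℝ (θ k ω - x) (mp k ω) : ℝ)) μ := fun k =>
    integrable_inner_bd μ (fun ω => θ k ω - x) (mp k) ((hθmeas k).sub_const x) (hmm k).1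
      (D x) B (hDbd x k) (hmbd k).1
  have hint_g : ∀ k, Integrable (fun ω => (inner ℝ (θ k ω - x) (g k ω) : ℝ)) μ := fun k =>
    integrable_inner_bd μ (fun ω => θ k ω - x) (g k) ((hθmeas k).sub_const x) (hgmeas k)
      (D x) B (hDbd x k) (hBbd k)
  have hint_rhs : ∀ k, Integrable
      (fun ω => c1 k * ‖m k ω‖^2 - c2 * (inner ℝ (θ k ω - x) (g k ω) : ℝ)) μ := fun k =>
    ((hmsqint k).const_mul (c1 k)).sub ((hint_g k).const_mul c2)
  have hint_lhs : Integrable (fun ω => ∑ k ∈ Finset.Icc 1 K, (inner ℝ (θ k ω - x) (mp k ω) : ℝ)) μ :=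
    integrable_finset_sum _ fun k _ => hint_mp k
  have hint_rhsum : Integrable (fun ω => T' + ∑ k ∈ Finset.Icc 1 K,
      (c1 k * ‖m k ω‖^2 - c2 * (inner ℝ (θ k ω - x) (g k ω) : ℝ))) μ :=
    (integrable_const T').add (integrable_finset_sum _ fun k _ => hint_rhs k)
  have hstep1 : ∫ ω, (∑ k ∈ Finset.Icc 1 K, (inner ℝ (θ k ω - x) (mp k ω) : ℝ)) ∂μ
      ≤ ∫ ω, (T' + ∑ k ∈ Finset.Icc 1 K,
        (c1 k * ‖m k ω‖^2 - c2 * (inner ℝ (θ k ω - x) (g k ω) : ℝ))) ∂μ :=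
    integral_mono_ae hint_lhs hint_rhsum master
  have hLHSeq : ∫ ω, (∑ k ∈ Finset.Icc 1 K, (inner ℝ (θ k ω - x) (mp k ω) : ℝ)) ∂μ
      = ∑ k ∈ Finset.Icc 1 K, ∫ ω, (inner ℝ (θ k ω - x) (mp k ω) : ℝ) ∂μ :=
    integral_finset_sum _ fun k _ => hint_mp k
  have hRHSeq : ∫ ω, (T' + ∑ k ∈ Finset.Icc 1 K,
        (c1 k * ‖m k ω‖^2 - c2 * (inner ℝ (θ k ω - x) (g k ω) : ℝ))) ∂μ
      = T' + ∑ k ∈ Finset.Icc 1 K, ∫ ω,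
        (c1 k * ‖m k ω‖^2 - c2 * (inner ℝ (θ k ω - x) (g k ω) : ℝ)) ∂μ := by
    have e1 : ∫ ω, (T' + ∑ k ∈ Finset.Icc 1 K,
          (c1 k * ‖m k ω‖^2 - c2 * (inner ℝ (θ k ω - x) (g k ω) : ℝ))) ∂μ
        = (∫ _ω, T' ∂μ) + ∫ ω, (∑ k ∈ Finset.Icc 1 K,
          (c1 k * ‖m k ω‖^2 - c2 * (inner ℝ (θ k ω - x) (g k ω) : ℝ))) ∂μ :=
      integral_add (integrable_const T') (integrable_finset_sum _ fun k _ => hint_rhs k)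
    have e2 : ∫ _ω, (T':ℝ) ∂μ = T' := by simp
    have e3 : ∫ ω, (∑ k ∈ Finset.Icc 1 K,
          (c1 k * ‖m k ω‖^2 - c2 * (inner ℝ (θ k ω - x) (g k ω) : ℝ))) ∂μ
        = ∑ k ∈ Finset.Icc 1 K, ∫ ω,
          (c1 k * ‖m k ω‖^2 - c2 * (inner ℝ (θ k ω - x) (g k ω) : ℝ)) ∂μ :=
      integral_finset_sum _ fun k _ => hint_rhs k
    rw [e1, e2, e3]
  have hc2nn : 0 ≤ c2 := by
    rw [hc2def]
    exact div_nonneg (by linarith) hβ0.le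
  have hint_k : ∀ k, ∫ ω, (c1 k * ‖m k ω‖^2 - c2 * (inner ℝ (θ k ω - x) (g k ω) : ℝ)) ∂μ
      ≤ c1 k * V + c2 * (D x * G) := by
    intro k
    have e1 : ∫ ω, (c1 k * ‖m k ω‖^2 - c2 * (inner ℝ (θ k ω - x) (g k ω) : ℝ)) ∂μ
        = (∫ ω, c1 k * ‖m k ω‖^2 ∂μ) - ∫ ω, c2 * (inner ℝ (θ k ω - x) (g k ω) : ℝ) ∂μ :=
      integral_sub ((hmsqint k).const_mul _) ((hint_g k).const_mul _)
    have e2 : ∫ ω, c1 k * ‖m k ω‖^2 ∂μ = c1 k * ∫ ω, ‖m k ω‖^2 ∂μ := integral_const_mul _ _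
    have e3 : ∫ ω, c2 * (inner ℝ (θ k ω - x) (g k ω) : ℝ) ∂μ
        = c2 * ∫ ω, (inner ℝ (θ k ω - x) (g k ω) : ℝ) ∂μ := integral_const_mul _ _
    rw [e1, e2, e3]
    have hc1nn : 0 ≤ c1 k := by
      rw [hc1def]
      apply div_nonneg (mul_nonneg (hαpos k).le (Real.sqrt_nonneg _))
      have h5 := hbt1pos k
      have h6 := Real.sqrt_nonneg vstar
      positivity
    have h1 : c1 k * (∫ ω, ‖m k ω‖^2 ∂μ) ≤ c1 k * V :=
      mul_le_mul_of_nonneg_left (hmsq k).2 hc1nn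
    have h2 : 0 ≤ c2 * (D x * G + ∫ ω, (inner ℝ (θ k ω - x) (g k ω) : ℝ) ∂μ) :=
      mul_nonneg hc2nn (by linarith [hinner_g k])
    nlinarith [h1, h2]
  have hc1bd : ∀ k ∈ Finset.Icc 1 K, c1 k * V + c2 * (D x * G)
      ≤ (V / (2 * Real.sqrt vstar * β1c * (1 - β1c))) * (α k * Real.sqrt (bt2 k))
        + c2 * (D x * G) := by
    intro k _
    apply add_le_add_left
    have hsv : 0 < Real.sqrt vstar := Real.sqrt_pos.2 hvstar
    have h1 : c1 k ≤ α k * Real.sqrt (bt2 k) / (2 * β1c * (1 - β1c) * Real.sqrt vstar) := by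
      rw [hc1def]
      apply div_le_div_of_nonneg_left (mul_nonneg (hαpos k).le (Real.sqrt_nonneg _))
      · exact mul_pos (mul_pos (mul_pos two_pos hβ0) (by linarith : (0:ℝ) < 1 - β1c)) hsv
      · have h7 := hbt1ge k
        have h8 : 0 < 2 * β1c * Real.sqrt vstar := by positivity
        nlinarith [h7, h8]
    calc c1 k * V ≤ (α k * Real.sqrt (bt2 k) / (2 * β1c * (1 - β1c) * Real.sqrt vstar)) * V :=
          mul_le_mul_of_nonneg_right h1 hV0
      _ = (V / (2 * Real.sqrt vstar * β1c * (1 - β1c))) * (α k * Real.sqrt (bt2 k)) := by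
          ring
  have hsum2 : ∑ k ∈ Finset.Icc 1 K, ∫ ω,
        (c1 k * ‖m k ω‖^2 - c2 * (inner ℝ (θ k ω - x) (g k ω) : ℝ)) ∂μ
      ≤ (V / (2 * Real.sqrt vstar * β1c * (1 - β1c)))
          * (∑ k ∈ Finset.Icc 1 K, α k * Real.sqrt (bt2 k))
        + (K:ℝ) * (c2 * (D x * G)) := by
    calc ∑ k ∈ Finset.Icc 1 K, ∫ ω,
          (c1 k * ‖m k ω‖^2 - c2 * (inner ℝ (θ k ω - x) (g k ω) : ℝ)) ∂μ
        ≤ ∑ k ∈ Finset.Icc 1 K, (c1 k * V + c2 * (D x * G)) :=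
          Finset.sum_le_sum fun k _ => hint_k k
      _ ≤ ∑ k ∈ Finset.Icc 1 K, ((V / (2 * Real.sqrt vstar * β1c * (1 - β1c)))
            * (α k * Real.sqrt (bt2 k)) + c2 * (D x * G)) :=
          Finset.sum_le_sum hc1bd
      _ = (V / (2 * Real.sqrt vstar * β1c * (1 - β1c)))
            * (∑ k ∈ Finset.Icc 1 K, α k * Real.sqrt (bt2 k)) + (K:ℝ) * (c2 * (D x * G)) := by
          rw [Finset.sum_add_distrib, ← Finset.mul_sum, Finset.sum_const, Nat.card_Icc,
            nsmul_eq_mul]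
          norm_num
  have htotal : ∑ k ∈ Finset.Icc 1 K, ∫ ω, (inner ℝ (θ k ω - x) (mp k ω) : ℝ) ∂μ
      ≤ T' + ((V / (2 * Real.sqrt vstar * β1c * (1 - β1c)))
          * (∑ k ∈ Finset.Icc 1 K, α k * Real.sqrt (bt2 k))
        + (K:ℝ) * (c2 * (D x * G))) := by
    rw [← hLHSeq]
    calc ∫ ω, (∑ k ∈ Finset.Icc 1 K, (inner ℝ (θ k ω - x) (mp k ω) : ℝ)) ∂μ
        ≤ _ := hstep1
      _ = _ := hRHSeq
      _ ≤ _ := by linarith [hsum2]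
  -- final arithmetic
  have hKpos : (0:ℝ) < (K:ℝ) := by
    have : (0:ℕ) < K := by omega
    exact_mod_cast this
  have hKne : (K:ℝ) ≠ 0 := ne_of_gt hKpos
  have hsumeq : ∑ k ∈ Finset.Icc 1 K, α k * Real.sqrt (1 - (β2 k) ^ (k+1))
      = ∑ k ∈ Finset.Icc 1 K, α k * Real.sqrt (bt2 k) :=
    Finset.sum_congr rfl fun k _ => by rw [hbt2app k]
  rw [hsumeq, hbt1app K, hbt2app K]
  have hmul := mul_le_mul_of_nonneg_left htotal (by positivity : (0:ℝ) ≤ 1/(K:ℝ))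
  refine le_trans hmul (le_of_eq ?_)
  have hγK : γ K = bt1 K / (2 * α K) := by rw [hγdef]
  rw [hT'def, hc2def, hγK]
  have hb2K : Real.sqrt (bt2 K) ≠ 0 := ne_of_gt (Real.sqrt_pos.2 (hbt2pos K))
  have hsv : Real.sqrt vstar ≠ 0 := ne_of_gt (Real.sqrt_pos.2 hvstar)
  have hαK : α K ≠ 0 := ne_of_gt (hαpos K)
  have h1β : (1:ℝ) - β1c ≠ 0 := by linarith
  field_simp
  ring
end

section
/- (Lemma A.7) For Adam, under assumptions (S1)-(S3) and (A1)-(A2), suppose additionally that β_{1k} = β₁ ∈ (0,1) for all k, (α_k)_{k∈ℕ} is monotone decreasing, and Condition (M) holds. Then for all K ≥ 1 and all θ ∈ ℝ^d: (1/K)∑_{k=1}^K E[(θ_k − θ)ᵀ m_k] ≤ d D̃(θ)√M β̃_{1K}/(2β₁ α_K √(β̃_{2K}) K) + ((σ²/b + G²)/(2√(v_*) β₁ (1−β₁) K)) ∑_{k=1}^K α_k √(β̃_{2k}) + D(θ) G (1−β₁)/β₁ + (1−β₁) D(θ)(B + √(σ²/b + G²)). -/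
open MeasureTheory Filter Real

lemma adam_abel_aux (c s : ℕ → ℝ) (S : ℝ)
    (hc : ∀ k, c k ≤ c (k+1)) (hc0 : ∀ k, 0 ≤ c k)
    (hs0 : ∀ k, 0 ≤ s k) (hsS : ∀ k, s k ≤ S) :
    ∀ K, 1 ≤ K → ∑ k ∈ Finset.Icc 1 K, c k * (s k - s (k+1)) ≤ c K * S - c K * s (K+1) := by
  intro K hK
  induction K with
  | zero => omega
  | succ K ih =>
    rcases Nat.eq_zero_or_pos K with h | h
    · subst h
      simp only [Finset.Icc_self, Finset.sum_singleton]
      nlinarith [hc0 1, hs0 2, hsS 1]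
    · have hK1 : 1 ≤ K := h
      have hih := ih hK1
      rw [Finset.sum_Icc_succ_top (by omega : 1 ≤ K + 1)]
      nlinarith [mul_nonneg (sub_nonneg.2 (hc K)) (sub_nonneg.2 (hsS (K+1))), hc0 (K+1), hs0 (K+2)]

lemma adam_master {d : ℕ} (K : ℕ) (hK : 1 ≤ K)
    (Θ Mv Vh : ℕ → Fin d → ℝ) (x : Fin d → ℝ)
    (α : ℕ → ℝ) (β1c : ℝ) (β2 : ℕ → ℝ) (Dt Mb vstar : ℝ)
    (hα : ∀ k, 0 < α k) (hαdec : ∀ k, α (k+1) ≤ α k)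
    (hβ1 : 0 < β1c) (hβ1' : β1c < 1)
    (hβ2 : ∀ k, 0 ≤ β2 k) (hβ2' : ∀ k, β2 k < 1)
    (hvstar : 0 < vstar) (hDt : 0 ≤ Dt)
    (hrec : ∀ k i, Θ (k+1) i = Θ k i - (α k / ((1 - β1c^(k+1)) * Real.sqrt (Vh k i))) * Mv k i)
    (hVlow : ∀ k i, vstar / (1 - (β2 k)^(k+1)) ≤ Vh k i)
    (hmonoV : ∀ k i, Vh k i ≤ Vh (k+1) i)
    (hVtop : ∀ i, Vh K i ≤ Mb / (1 - (β2 K)^(K+1)))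
    (hsq : ∀ k i, (Θ k i - x i)^2 ≤ Dt) :
    ∑ k ∈ Finset.Icc 1 K, ∑ i, (Θ k i - x i) * Mv k i ≤
      (d:ℝ) * Dt * Real.sqrt Mb * (1 - β1c^(K+1)) / (2 * α K * Real.sqrt (1 - (β2 K)^(K+1)))
      + ∑ k ∈ Finset.Icc 1 K,
          (α k * Real.sqrt (1 - (β2 k)^(k+1)) / (2 * (1 - β1c^(k+1)) * Real.sqrt vstar)) * ∑ i, (Mv k i)^2 := by
  have hb1 : ∀ k : ℕ, 0 < 1 - β1c^(k+1) := by
    intro k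
    have := pow_lt_one₀ (le_of_lt hβ1) hβ1' (by omega : k+1 ≠ 0)
    linarith
  have hb2 : ∀ k : ℕ, 0 < 1 - (β2 k)^(k+1) := by
    intro k
    have := pow_lt_one₀ (hβ2 k) (hβ2' k) (by omega : k+1 ≠ 0)
    linarith
  have hVpos : ∀ k i, 0 < Vh k i := fun k i =>
    lt_of_lt_of_le (div_pos hvstar (hb2 k)) (hVlow k i)
  have hsV : ∀ k i, 0 < Real.sqrt (Vh k i) := fun k i => Real.sqrt_pos.2 (hVpos k i)
  have hsvstar : (0:ℝ) < Real.sqrt vstar := Real.sqrt_pos.2 hvstar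
  -- key identity
  have hid : ∀ k i, (Θ k i - x i) * Mv k i =
      ((1 - β1c^(k+1)) * Real.sqrt (Vh k i) / (2 * α k)) * ((Θ k i - x i)^2 - (Θ (k+1) i - x i)^2)
      + (α k / (2 * (1 - β1c^(k+1)) * Real.sqrt (Vh k i))) * (Mv k i)^2 := by
    intro k i
    rw [hrec k i]
    have h1 : Real.sqrt (Vh k i) ≠ 0 := ne_of_gt (hsV k i)
    have h2 : (1 - β1c^(k+1)) ≠ 0 := ne_of_gt (hb1 k)
    have h3 : α k ≠ 0 := ne_of_gt (hα k)
    field_simp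
    ring
  have hsum : ∑ k ∈ Finset.Icc 1 K, ∑ i, (Θ k i - x i) * Mv k i
      = (∑ k ∈ Finset.Icc 1 K, ∑ i, ((1 - β1c^(k+1)) * Real.sqrt (Vh k i) / (2 * α k)) * ((Θ k i - x i)^2 - (Θ (k+1) i - x i)^2))
      + ∑ k ∈ Finset.Icc 1 K, ∑ i, (α k / (2 * (1 - β1c^(k+1)) * Real.sqrt (Vh k i))) * (Mv k i)^2 := by
    rw [← Finset.sum_add_distrib]
    refine Finset.sum_congr rfl fun k _ => ?_
    rw [← Finset.sum_add_distrib]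
    exact Finset.sum_congr rfl fun i _ => hid k i
  have hA : ∑ k ∈ Finset.Icc 1 K, ∑ i, ((1 - β1c^(k+1)) * Real.sqrt (Vh k i) / (2 * α k)) * ((Θ k i - x i)^2 - (Θ (k+1) i - x i)^2)
      ≤ (d:ℝ) * Dt * Real.sqrt Mb * (1 - β1c^(K+1)) / (2 * α K * Real.sqrt (1 - (β2 K)^(K+1))) := by
    rw [Finset.sum_comm]
    have per_i : ∀ i : Fin d,
        ∑ k ∈ Finset.Icc 1 K, ((1 - β1c^(k+1)) * Real.sqrt (Vh k i) / (2 * α k)) * ((Θ k i - x i)^2 - (Θ (k+1) i - x i)^2)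
        ≤ Dt * Real.sqrt Mb * (1 - β1c^(K+1)) / (2 * α K * Real.sqrt (1 - (β2 K)^(K+1))) := by
      intro i
      have hMbpos : 0 < Mb := by
        have h1 : 0 < Mb / (1 - (β2 K)^(K+1)) := lt_of_lt_of_le (hVpos K i) (hVtop i)
        have h2 := mul_pos h1 (hb2 K)
        rwa [div_mul_cancel₀ _ (ne_of_gt (hb2 K))] at h2
      have hcmono : ∀ k : ℕ, (1 - β1c^(k+1)) * Real.sqrt (Vh k i) / (2 * α k)
          ≤ (1 - β1c^(k+1+1)) * Real.sqrt (Vh (k+1) i) / (2 * α (k+1)) := by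
        intro k
        refine div_le_div₀ (mul_nonneg (le_of_lt (hb1 _)) (Real.sqrt_nonneg _)) ?_ (by linarith [hα (k+1)]) (by nlinarith [hαdec k])
        refine mul_le_mul ?_ (Real.sqrt_le_sqrt (hmonoV k i)) (Real.sqrt_nonneg _) (le_of_lt (hb1 _))
        have := pow_le_pow_of_le_one (le_of_lt hβ1) (le_of_lt hβ1') (by omega : k+1 ≤ k+2)
        linarith
      have hc0 : ∀ k : ℕ, 0 ≤ (1 - β1c^(k+1)) * Real.sqrt (Vh k i) / (2 * α k) := by
        intro k
        exact div_nonneg (mul_nonneg (le_of_lt (hb1 _)) (Real.sqrt_nonneg _)) (by linarith [hα k])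
      have habel := adam_abel_aux (fun k => (1 - β1c^(k+1)) * Real.sqrt (Vh k i) / (2 * α k))
        (fun k => (Θ k i - x i)^2) Dt hcmono hc0 (fun k => sq_nonneg _) (fun k => hsq k i) K hK
      have hlast : (1 - β1c^(K+1)) * Real.sqrt (Vh K i) / (2 * α K) * Dt ≤
          Dt * Real.sqrt Mb * (1 - β1c^(K+1)) / (2 * α K * Real.sqrt (1 - (β2 K)^(K+1))) := by
        have hs1 : Real.sqrt (Vh K i) ≤ Real.sqrt Mb / Real.sqrt (1 - (β2 K)^(K+1)) := by
          rw [← Real.sqrt_div (le_of_lt hMbpos)]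
          exact Real.sqrt_le_sqrt (hVtop i)
        have e1 : Dt * Real.sqrt Mb * (1 - β1c^(K+1)) / (2 * α K * Real.sqrt (1 - (β2 K)^(K+1)))
            = (1 - β1c^(K+1)) * (Real.sqrt Mb / Real.sqrt (1 - (β2 K)^(K+1))) / (2 * α K) * Dt := by
          ring
        rw [e1]
        have h2 : (1 - β1c^(K+1)) * Real.sqrt (Vh K i) / (2 * α K)
            ≤ (1 - β1c^(K+1)) * (Real.sqrt Mb / Real.sqrt (1 - (β2 K)^(K+1))) / (2 * α K) := by
          apply div_le_div_of_nonneg_right _ (by linarith [hα K])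
          exact mul_le_mul_of_nonneg_left hs1 (le_of_lt (hb1 K))
        exact mul_le_mul_of_nonneg_right h2 hDt
      calc ∑ k ∈ Finset.Icc 1 K, ((1 - β1c^(k+1)) * Real.sqrt (Vh k i) / (2 * α k)) * ((Θ k i - x i)^2 - (Θ (k+1) i - x i)^2)
          ≤ (1 - β1c^(K+1)) * Real.sqrt (Vh K i) / (2 * α K) * Dt
            - (1 - β1c^(K+1)) * Real.sqrt (Vh K i) / (2 * α K) * (Θ (K+1) i - x i)^2 := habel
        _ ≤ (1 - β1c^(K+1)) * Real.sqrt (Vh K i) / (2 * α K) * Dt := by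
            nlinarith [mul_nonneg (hc0 K) (sq_nonneg (Θ (K+1) i - x i))]
        _ ≤ _ := hlast
    calc ∑ i : Fin d, ∑ k ∈ Finset.Icc 1 K, ((1 - β1c^(k+1)) * Real.sqrt (Vh k i) / (2 * α k)) * ((Θ k i - x i)^2 - (Θ (k+1) i - x i)^2)
        ≤ ∑ _i : Fin d, Dt * Real.sqrt Mb * (1 - β1c^(K+1)) / (2 * α K * Real.sqrt (1 - (β2 K)^(K+1))) :=
          Finset.sum_le_sum fun i _ => per_i i
      _ = (d:ℝ) * Dt * Real.sqrt Mb * (1 - β1c^(K+1)) / (2 * α K * Real.sqrt (1 - (β2 K)^(K+1))) := by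
          rw [Finset.sum_const, Finset.card_univ, Fintype.card_fin]
          push_cast
          ring
  have hB : ∀ k ∈ Finset.Icc 1 K, ∑ i, (α k / (2 * (1 - β1c^(k+1)) * Real.sqrt (Vh k i))) * (Mv k i)^2
      ≤ (α k * Real.sqrt (1 - (β2 k)^(k+1)) / (2 * (1 - β1c^(k+1)) * Real.sqrt vstar)) * ∑ i, (Mv k i)^2 := by
    intro k _
    rw [Finset.mul_sum]
    refine Finset.sum_le_sum fun i _ => ?_
    refine mul_le_mul_of_nonneg_right ?_ (sq_nonneg _)
    have h5 : Real.sqrt vstar ≤ Real.sqrt (Vh k i) * Real.sqrt (1 - (β2 k)^(k+1)) := by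
      rw [← Real.sqrt_mul (le_of_lt (hVpos k i))]
      apply Real.sqrt_le_sqrt
      rw [← div_le_iff₀ (hb2 k)] at *
      exact hVlow k i
    have hp1 : (0:ℝ) < 2 * (1 - β1c^(k+1)) * Real.sqrt (Vh k i) := by
      have := hb1 k; have := hsV k i; nlinarith
    have hp2 : (0:ℝ) < 2 * (1 - β1c^(k+1)) * Real.sqrt vstar := by
      have := hb1 k; nlinarith
    have hp3 : (0:ℝ) < 2 * (1 - β1c^(k+1)) * α k := by
      have := hb1 k; have := hα k; nlinarith
    rw [div_le_div_iff₀ hp1 hp2]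
    nlinarith [mul_le_mul_of_nonneg_left h5 (le_of_lt hp3)]
  calc ∑ k ∈ Finset.Icc 1 K, ∑ i, (Θ k i - x i) * Mv k i
      = _ + _ := hsum
    _ ≤ (d:ℝ) * Dt * Real.sqrt Mb * (1 - β1c^(K+1)) / (2 * α K * Real.sqrt (1 - (β2 K)^(K+1)))
        + ∑ k ∈ Finset.Icc 1 K, (α k * Real.sqrt (1 - (β2 k)^(k+1)) / (2 * (1 - β1c^(k+1)) * Real.sqrt vstar)) * ∑ i, (Mv k i)^2 :=
      add_le_add hA (Finset.sum_le_sum hB)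


lemma adam_sum_sq {d : ℕ} (y : EuclideanSpace ℝ (Fin d)) : ∑ i, (y i)^2 = ‖y‖^2 := by
  rw [EuclideanSpace.norm_eq, Real.sq_sqrt (Finset.sum_nonneg fun i _ => sq_nonneg _)]
  simp [Real.norm_eq_abs, sq_abs]

lemma adam_coord_le {d : ℕ} (y : EuclideanSpace ℝ (Fin d)) (i : Fin d) : |y i| ≤ ‖y‖ := by
  have h1 : (y i)^2 ≤ ‖y‖^2 := by
    rw [← adam_sum_sq]
    exact Finset.single_le_sum (fun j _ => sq_nonneg (y j)) (Finset.mem_univ i)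
  calc |y i| = Real.sqrt ((y i)^2) := (Real.sqrt_sq_eq_abs _).symm
    _ ≤ Real.sqrt (‖y‖^2) := Real.sqrt_le_sqrt h1
    _ = ‖y‖ := Real.sqrt_sq (norm_nonneg _)

lemma adam_integrable_of_bound {Ω : Type*} {m0 : MeasurableSpace Ω} {μ : Measure Ω}
    [IsFiniteMeasure μ] {E : Type*} [NormedAddCommGroup E] {h : Ω → E}
    (hm : AEStronglyMeasurable h μ) (C : ℝ) (hb : ∀ᵐ ω ∂μ, ‖h ω‖ ≤ C) : Integrable h μ :=
  Integrable.mono' (integrable_const C) hm hb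

lemma adam_cross {Ω : Type*} [m0 : MeasurableSpace Ω] (μ : Measure Ω) [IsProbabilityMeasure μ]
    {d e : ℕ} (φ : Ω → EuclideanSpace ℝ (Fin e)) (hφ : Measurable φ)
    (u w : Ω → EuclideanSpace ℝ (Fin d))
    (hu_meas : Measurable[(MeasurableSpace.comap φ inferInstance)] u) (hw_meas : Measurable[m0] w)
    (G C : ℝ) (hG0 : 0 ≤ G) (hC0 : 0 ≤ C)
    (hubd : ∀ᵐ ω ∂μ, ‖u ω‖ ≤ G) (hwbd : ∀ᵐ ω ∂μ, ‖w ω‖ ≤ C)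
    (hcond : μ[w | (MeasurableSpace.comap φ inferInstance)] =ᵐ[μ] 0) :
    ∫ ω, (inner ℝ (u ω) (w ω) : ℝ) ∂μ = 0 := by
  have hm : MeasurableSpace.comap φ inferInstance ≤ m0 := hφ.comap_le
  haveI : SigmaFinite (μ.trim hm) := by
    haveI := isFiniteMeasure_trim (μ := μ) hm
    infer_instance
  have hu_meas0 : Measurable[m0] u := hu_meas.mono hm le_rfl
  have hw_int : Integrable w μ := adam_integrable_of_bound (hw_meas.aestronglyMeasurable (μ := μ)) C hwbd
  have hwi_int : ∀ i : Fin d, Integrable (fun ω => w ω i) μ := fun i =>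
    adam_integrable_of_bound ((measurable_pi_apply i).comp ((WithLp.measurable_ofLp _ _).comp hw_meas)).aestronglyMeasurable C
      (by filter_upwards [hwbd] with ω h using le_trans (by simpa using adam_coord_le (w ω) i) h)
  have hui_wi_int : ∀ i : Fin d, Integrable (fun ω => u ω i * w ω i) μ := fun i =>
    adam_integrable_of_bound
      (((measurable_pi_apply i).comp ((WithLp.measurable_ofLp _ _).comp hu_meas0)).mul ((measurable_pi_apply i).comp ((WithLp.measurable_ofLp _ _).comp hw_meas))).aestronglyMeasurable
      (G * C) (by
        filter_upwards [hubd, hwbd] with ω h1 h2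
        have h3 := adam_coord_le (u ω) i
        have h4 := adam_coord_le (w ω) i
        rw [Real.norm_eq_abs, abs_mul]
        exact mul_le_mul (le_trans h3 h1) (le_trans h4 h2) (abs_nonneg _) hG0)
  have hwi_cond : ∀ i : Fin d, μ[(fun ω => w ω i) | (MeasurableSpace.comap φ inferInstance)] =ᵐ[μ] 0 := by
    intro i
    have h0 : (fun _ : Ω => (0:ℝ)) =ᵐ[μ] μ[(fun ω => w ω i)|(MeasurableSpace.comap φ inferInstance)] := by
      refine ae_eq_condExp_of_forall_setIntegral_eq hm (hwi_int i)
        (fun s _ _ => (integrable_const (0:ℝ)).integrableOn) (fun s hs hμs => ?_)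
        (StronglyMeasurable.aestronglyMeasurable (@stronglyMeasurable_const _ _ (MeasurableSpace.comap φ inferInstance) _ 0))
      have h1 : ∫ ω in s, w ω i ∂μ = (EuclideanSpace.proj i : EuclideanSpace ℝ (Fin d) →L[ℝ] ℝ)
          (∫ ω in s, w ω ∂μ) := by
        have := ContinuousLinearMap.integral_comp_comm
          (EuclideanSpace.proj i : EuclideanSpace ℝ (Fin d) →L[ℝ] ℝ)
          (hw_int.integrableOn (s := s))
        simpa [EuclideanSpace.proj] using this
      have h2 : ∫ ω in s, w ω ∂μ = 0 := by
        rw [← setIntegral_condExp hm hw_int hs]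
        calc ∫ ω in s, (μ[w|(MeasurableSpace.comap φ inferInstance)]) ω ∂μ = ∫ ω in s, (0 : EuclideanSpace ℝ (Fin d)) ∂μ :=
              integral_congr_ae (ae_restrict_of_ae hcond)
          _ = 0 := by simp
      rw [h1, h2]
      simp
    exact h0.symm
  have hui_sm : ∀ i : Fin d, StronglyMeasurable[(MeasurableSpace.comap φ inferInstance)] (fun ω => u ω i) := fun i =>
    ((measurable_pi_apply i).comp ((WithLp.measurable_ofLp _ _).comp hu_meas)).stronglyMeasurable
  have hzero : ∀ i : Fin d, ∫ ω, u ω i * w ω i ∂μ = 0 := by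
    intro i
    have hmul := condExp_mul_of_stronglyMeasurable_left (μ := μ) (hui_sm i) (hui_wi_int i) (hwi_int i)
    have hmul0 : μ[(fun ω => u ω i) * (fun ω => w ω i)|(MeasurableSpace.comap φ inferInstance)] =ᵐ[μ] 0 := by
      refine hmul.trans ?_
      filter_upwards [hwi_cond i] with ω hω
      simp [hω]
    calc ∫ ω, u ω i * w ω i ∂μ
        = ∫ ω, (μ[(fun ω => u ω i) * (fun ω => w ω i)|(MeasurableSpace.comap φ inferInstance)]) ω ∂μ := (integral_condExp hm).symm
      _ = ∫ ω, (0:ℝ) ∂μ := integral_congr_ae hmul0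
      _ = 0 := by simp
  have hin : ∀ ω, (inner ℝ (u ω) (w ω) : ℝ) = ∑ i, u ω i * w ω i := by
    intro ω; simp [PiLp.inner_apply, RCLike.inner_apply]
    exact Finset.sum_congr rfl fun i _ => mul_comm _ _
  calc ∫ ω, (inner ℝ (u ω) (w ω) : ℝ) ∂μ = ∫ ω, ∑ i, u ω i * w ω i ∂μ := by simp_rw [hin]
    _ = ∑ i, ∫ ω, u ω i * w ω i ∂μ := integral_finset_sum _ (fun i _ => hui_wi_int i)
    _ = 0 := by simp [hzero]
set_option maxHeartbeats 2000000 in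
theorem adam_lemmaA7
    {Ω : Type*} [MeasurableSpace Ω] (μ : Measure Ω) [IsProbabilityMeasure μ]
    {d : ℕ} (f : EuclideanSpace ℝ (Fin d) → ℝ)
    (θ m mp v g dvec : ℕ → Ω → EuclideanSpace ℝ (Fin d))
    (vhat : ℕ → Ω → Fin d → ℝ)
    (α β1 β2 : ℕ → ℝ)
    (σ2 b G B M vstar : ℝ)
    (D : EuclideanSpace ℝ (Fin d) → ℝ)
    (hf : ContDiff ℝ 1 f)
    (hb : 0 < b) (hσ2 : 0 ≤ σ2) (hG : 0 < G) (hB : 0 < B)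
    (hαpos : ∀ k, 0 < α k)
    (hmp0 : ∀ ω, mp 0 ω = 0)
    (hmrec : ∀ k ω, m k ω = β1 k • mp k ω + (1 - β1 k) • g k ω)
    (hmpshift : ∀ k ω, mp (k+1) ω = m k ω)
    (hv0 : ∀ ω (i : Fin d), v 0 ω i = (1 - β2 0) * (g 0 ω i) ^ 2)
    (hvrec : ∀ k ω (i : Fin d), v (k+1) ω i = β2 (k+1) * v k ω i + (1 - β2 (k+1)) * (g (k+1) ω i) ^ 2)
    (hvhat : ∀ k ω (i : Fin d), vhat k ω i = v k ω i / (1 - (β2 k) ^ (k+1)))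
    (hdvec : ∀ k ω (i : Fin d), dvec k ω i = -(m k ω i / (1 - (β1 k) ^ (k+1))) / Real.sqrt (vhat k ω i))
    (hθrec : ∀ k ω, θ (k+1) ω = θ k ω + α k • dvec k ω)
    (hθmeas : ∀ k, Measurable (θ k)) (hgmeas : ∀ k, Measurable (g k))
    (hunbiased : ∀ k, μ[g k | MeasurableSpace.comap (θ k) inferInstance]
        =ᵐ[μ] fun ω => gradient f (θ k ω))
    (hvar : ∀ k, ∫ ω, ‖g k ω - gradient f (θ k ω)‖ ^ 2 ∂μ ≤ σ2 / b)
    (hGbd : ∀ k, ∀ᵐ ω ∂μ, ‖gradient f (θ k ω)‖ ≤ G)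
    (hBbd : ∀ k, ∀ᵐ ω ∂μ, ‖g k ω‖ ≤ B)
    (hDpos : ∀ x, 0 < D x)
    (hDbd : ∀ x k, ∀ᵐ ω ∂μ, ‖θ k ω - x‖ ≤ D x)
    (hM : ∀ k, ∀ᵐ ω ∂μ, ∀ i, (g k ω i) ^ 2 ≤ M)
    (hvstar : 0 < vstar)
    (hvstarle : ∀ k, ∀ᵐ ω ∂μ, ∀ i, vstar ≤ v k ω i)
    (hβ2mem : ∀ k, β2 k ∈ Set.Ico (0:ℝ) 1)
    (β1c : ℝ) (hβ1c : β1c ∈ Set.Ioo (0:ℝ) 1) (hβ1const : ∀ k, β1 k = β1c)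
    (hαdec : ∀ k, α (k+1) ≤ α k)
    (hmono : ∀ k (i : Fin d), ∀ᵐ ω ∂μ, vhat k ω i ≤ vhat (k+1) ω i)
    (Dtil : EuclideanSpace ℝ (Fin d) → ℝ)
    (hDtil : ∀ x k, ∀ᵐ ω ∂μ, ∀ i, (θ k ω i - x i) ^ 2 ≤ Dtil x)
    :
    ∀ (K : ℕ), 1 ≤ K → ∀ x : EuclideanSpace ℝ (Fin d),
      (1 / (K:ℝ)) * ∑ k ∈ Finset.Icc 1 K, ∫ ω, (inner ℝ (θ k ω - x) (m k ω) : ℝ) ∂μ ≤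
        (d:ℝ) * Dtil x * Real.sqrt M * (1 - β1c ^ (K+1)) / (2 * β1c * α K * Real.sqrt (1 - (β2 K) ^ (K+1)) * (K:ℝ))
        + (σ2 / b + G ^ 2) / (2 * Real.sqrt vstar * β1c * (1 - β1c) * (K:ℝ)) * ∑ k ∈ Finset.Icc 1 K, α k * Real.sqrt (1 - (β2 k) ^ (k+1))
        + D x * G * ((1 - β1c) / β1c)
        + (1 - β1c) * D x * (B + Real.sqrt (σ2 / b + G ^ 2)) := by
  obtain ⟨hβ1pos, hβ1lt⟩ := hβ1c
  have hβ2_0 : ∀ k, 0 ≤ β2 k := fun k => (hβ2mem k).1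
  have hβ2_1 : ∀ k, β2 k < 1 := fun k => (hβ2mem k).2
  have hG0 : (0:ℝ) ≤ G := hG.le
  have hS0 : (0:ℝ) ≤ σ2 / b + G ^ 2 := by
    have : (0:ℝ) ≤ σ2 / b := div_nonneg hσ2 hb.le
    positivity
  have hb1 : ∀ k : ℕ, 0 < 1 - β1c^(k+1) := by
    intro k
    have := pow_lt_one₀ (le_of_lt hβ1pos) hβ1lt (by omega : k+1 ≠ 0)
    linarith
  have hb2 : ∀ k : ℕ, 0 < 1 - (β2 k)^(k+1) := by
    intro k
    have := pow_lt_one₀ (hβ2_0 k) (hβ2_1 k) (by omega : k+1 ≠ 0)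
    linarith
  intro K hK x
  have hKpos : (0:ℝ) < (K:ℝ) := by exact_mod_cast hK
  -- nonnegativity of trailing terms
  have hT3 : 0 ≤ D x * G * ((1 - β1c) / β1c) := by
    have h1 := hDpos x
    have h2 : (0:ℝ) ≤ (1 - β1c)/β1c := div_nonneg (by linarith) hβ1pos.le
    positivity
  have hT4 : 0 ≤ (1 - β1c) * D x * (B + Real.sqrt (σ2 / b + G ^ 2)) := by
    have h1 := hDpos x
    have h2 : (0:ℝ) ≤ 1 - β1c := by linarith
    have h3 : (0:ℝ) ≤ B + Real.sqrt (σ2 / b + G ^ 2) := by positivity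
    positivity
  have hT2 : 0 ≤ (σ2 / b + G ^ 2) / (2 * Real.sqrt vstar * β1c * (1 - β1c) * (K:ℝ)) *
      ∑ k ∈ Finset.Icc 1 K, α k * Real.sqrt (1 - (β2 k) ^ (k+1)) := by
    apply mul_nonneg
    · apply div_nonneg hS0
      have h1 : (0:ℝ) ≤ Real.sqrt vstar := Real.sqrt_nonneg _
      have h2 : (0:ℝ) ≤ 1 - β1c := by linarith
      positivity
    · exact Finset.sum_nonneg fun k _ => mul_nonneg (hαpos k).le (Real.sqrt_nonneg _)
  rcases Nat.eq_zero_or_pos d with hd0 | hdpos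
  · -- degenerate dimension-zero case
    subst hd0
    have hin0 : ∀ k ω, (inner ℝ (θ k ω - x) (m k ω) : ℝ) = 0 := by
      intro k ω
      simp [PiLp.inner_apply]
    have hL : (1 / (K:ℝ)) * ∑ k ∈ Finset.Icc 1 K, ∫ ω, (inner ℝ (θ k ω - x) (m k ω) : ℝ) ∂μ = 0 := by
      simp [hin0]
    rw [hL]
    have hT1 : ((0:ℕ):ℝ) * Dtil x * Real.sqrt M * (1 - β1c ^ (K+1)) /
        (2 * β1c * α K * Real.sqrt (1 - (β2 K) ^ (K+1)) * (K:ℝ)) = 0 := by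
      simp
    rw [hT1]
    linarith
  · -- main case
    -- gradient continuity and measurability facts
    have hgradcont : Continuous (gradient f) := by
      have h1 : Continuous (fderiv ℝ f) := hf.continuous_fderiv one_ne_zero
      exact (InnerProductSpace.toDual ℝ (EuclideanSpace ℝ (Fin d))).symm.continuous.comp h1
    have hmeas : ∀ k, Measurable (mp k) ∧ Measurable (m k) := by
      intro k
      induction k with
      | zero =>
        have h0 : Measurable (mp 0) := by
          have he : mp 0 = fun _ => 0 := funext hmp0
          rw [he]; exact measurable_const
        refine ⟨h0, ?_⟩
        have he : m 0 = fun ω => β1 0 • mp 0 ω + (1 - β1 0) • g 0 ω := funext (hmrec 0)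
        rw [he]
        exact (h0.const_smul (β1 0)).add ((hgmeas 0).const_smul (1 - β1 0))
      | succ k ih =>
        have h0 : Measurable (mp (k+1)) := by
          have he : mp (k+1) = m k := funext (hmpshift k)
          rw [he]; exact ih.2
        refine ⟨h0, ?_⟩
        have he : m (k+1) = fun ω => β1 (k+1) • mp (k+1) ω + (1 - β1 (k+1)) • g (k+1) ω :=
          funext (hmrec (k+1))
        rw [he]
        exact (h0.const_smul (β1 (k+1))).add ((hgmeas (k+1)).const_smul (1 - β1 (k+1)))
    -- norm bound for m
    have hnorm_step : ∀ k ω, ‖mp k ω‖ ≤ B → ‖g k ω‖ ≤ B → ‖m k ω‖ ≤ B := by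
      intro k ω h1 h2
      rw [hmrec, hβ1const]
      calc ‖β1c • mp k ω + (1 - β1c) • g k ω‖
          ≤ ‖β1c • mp k ω‖ + ‖(1-β1c) • g k ω‖ := norm_add_le _ _
        _ = β1c * ‖mp k ω‖ + (1-β1c) * ‖g k ω‖ := by
            rw [norm_smul, norm_smul, Real.norm_eq_abs, Real.norm_eq_abs,
              abs_of_pos hβ1pos, abs_of_pos (by linarith)]
        _ ≤ β1c * B + (1-β1c) * B :=
            add_le_add (mul_le_mul_of_nonneg_left h1 hβ1pos.le)
              (mul_le_mul_of_nonneg_left h2 (by linarith))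
        _ = B := by ring
    have hmbd : ∀ k, (∀ᵐ ω ∂μ, ‖mp k ω‖ ≤ B) ∧ (∀ᵐ ω ∂μ, ‖m k ω‖ ≤ B) := by
      intro k
      induction k with
      | zero =>
        have h0 : ∀ᵐ ω ∂μ, ‖mp 0 ω‖ ≤ B := Eventually.of_forall fun ω => by
          rw [hmp0]; simpa using hB.le
        refine ⟨h0, ?_⟩
        filter_upwards [h0, hBbd 0] with ω h1 h2 using hnorm_step 0 ω h1 h2
      | succ k ih =>
        have h0 : ∀ᵐ ω ∂μ, ‖mp (k+1) ω‖ ≤ B := by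
          have he : mp (k+1) = m k := funext (hmpshift k)
          rw [he]; exact ih.2
        refine ⟨h0, ?_⟩
        filter_upwards [h0, hBbd (k+1)] with ω h1 h2 using hnorm_step (k+1) ω h1 h2
    -- integrability basics
    have hg_int : ∀ k, Integrable (g k) μ := fun k =>
      adam_integrable_of_bound (hgmeas k).aestronglyMeasurable B (hBbd k)
    have hg2_int : ∀ k, Integrable (fun ω => ‖g k ω‖^2) μ := fun k =>
      adam_integrable_of_bound ((hgmeas k).norm.pow_const 2).aestronglyMeasurable (B^2) (by
        filter_upwards [hBbd k] with ω h
        rw [Real.norm_eq_abs, abs_of_nonneg (by positivity)]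
        exact pow_le_pow_left₀ (norm_nonneg _) h 2)
    have hm2_int : ∀ k, Integrable (fun ω => ‖m k ω‖^2) μ := fun k =>
      adam_integrable_of_bound (((hmeas k).2.norm).pow_const 2).aestronglyMeasurable (B^2) (by
        filter_upwards [(hmbd k).2] with ω h
        rw [Real.norm_eq_abs, abs_of_nonneg (by positivity)]
        exact pow_le_pow_left₀ (norm_nonneg _) h 2)
    have hmp2_int : ∀ k, Integrable (fun ω => ‖mp k ω‖^2) μ := fun k =>
      adam_integrable_of_bound (((hmeas k).1.norm).pow_const 2).aestronglyMeasurable (B^2) (by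
        filter_upwards [(hmbd k).1] with ω h
        rw [Real.norm_eq_abs, abs_of_nonneg (by positivity)]
        exact pow_le_pow_left₀ (norm_nonneg _) h 2)
    -- second moment bound for g
    have hg2 : ∀ k, ∫ ω, ‖g k ω‖^2 ∂μ ≤ σ2/b + G^2 := by
      intro k
      have humeas : Measurable (fun ω => gradient f (θ k ω)) := hgradcont.measurable.comp (hθmeas k)
      have humσ : Measurable[MeasurableSpace.comap (θ k) inferInstance]
          (fun ω => gradient f (θ k ω)) :=
        hgradcont.measurable.comp (Measurable.of_comap_le le_rfl)
      have hu_int : Integrable (fun ω => gradient f (θ k ω)) μ :=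
        adam_integrable_of_bound humeas.aestronglyMeasurable G (hGbd k)
      have hw_meas : Measurable (fun ω => g k ω - gradient f (θ k ω)) := (hgmeas k).sub humeas
      have hw_bd : ∀ᵐ ω ∂μ, ‖g k ω - gradient f (θ k ω)‖ ≤ B + G := by
        filter_upwards [hGbd k, hBbd k] with ω h1 h2
        exact le_trans (norm_sub_le _ _) (add_le_add h2 h1)
      have hw_int : Integrable (fun ω => g k ω - gradient f (θ k ω)) μ := (hg_int k).sub hu_int
      have hcond : μ[(fun ω => g k ω - gradient f (θ k ω)) |
          MeasurableSpace.comap (θ k) inferInstance] =ᵐ[μ] 0 := by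
        have h1 := condExp_sub (m := MeasurableSpace.comap (θ k) inferInstance)
          (hg_int k) hu_int
        have h2 : μ[(fun ω => gradient f (θ k ω)) | MeasurableSpace.comap (θ k) inferInstance]
            = fun ω => gradient f (θ k ω) :=
          condExp_of_stronglyMeasurable ((hθmeas k).comap_le) humσ.stronglyMeasurable hu_int
        refine h1.trans ?_
        rw [h2]
        filter_upwards [hunbiased k] with ω hω
        simp only [Pi.sub_apply, hω, Pi.zero_apply, sub_self]
      have hcross := adam_cross μ (θ k) (hθmeas k) (fun ω => gradient f (θ k ω))
        (fun ω => g k ω - gradient f (θ k ω)) humσ hw_meas G (B+G) hG0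
        (by linarith) (hGbd k) hw_bd hcond
      have huw_meas : Measurable (fun ω =>
          (inner ℝ (gradient f (θ k ω)) (g k ω - gradient f (θ k ω)) : ℝ)) :=
        humeas.inner hw_meas
      have huw_int : Integrable (fun ω =>
          (inner ℝ (gradient f (θ k ω)) (g k ω - gradient f (θ k ω)) : ℝ)) μ :=
        adam_integrable_of_bound huw_meas.aestronglyMeasurable (G*(B+G)) (by
          filter_upwards [hGbd k, hw_bd] with ω h1 h2
          rw [Real.norm_eq_abs]
          exact le_trans (abs_real_inner_le_norm _ _)
            (mul_le_mul h1 h2 (norm_nonneg _) hG0))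
      have hw2_int : Integrable (fun ω => ‖g k ω - gradient f (θ k ω)‖^2) μ :=
        adam_integrable_of_bound (hw_meas.norm.pow_const 2).aestronglyMeasurable ((B+G)^2) (by
          filter_upwards [hw_bd] with ω h1
          rw [Real.norm_eq_abs, abs_of_nonneg (by positivity)]
          exact pow_le_pow_left₀ (norm_nonneg _) h1 2)
      have hu2_int : Integrable (fun ω => ‖gradient f (θ k ω)‖^2) μ :=
        adam_integrable_of_bound (humeas.norm.pow_const 2).aestronglyMeasurable (G^2) (by
          filter_upwards [hGbd k] with ω h1
          rw [Real.norm_eq_abs, abs_of_nonneg (by positivity)]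
          exact pow_le_pow_left₀ (norm_nonneg _) h1 2)
      have hexp : ∀ ω, ‖g k ω‖^2 = ‖g k ω - gradient f (θ k ω)‖^2
          + 2*(inner ℝ (gradient f (θ k ω)) (g k ω - gradient f (θ k ω)) : ℝ)
          + ‖gradient f (θ k ω)‖^2 := by
        intro ω
        have h1 : g k ω = gradient f (θ k ω) + (g k ω - gradient f (θ k ω)) := by abel
        calc ‖g k ω‖^2 = ‖gradient f (θ k ω) + (g k ω - gradient f (θ k ω))‖^2 := by rw [← h1]
          _ = _ := by rw [norm_add_sq_real]; ring
      have hint_u2 : ∫ ω, ‖gradient f (θ k ω)‖^2 ∂μ ≤ G^2 := by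
        have h1 := integral_mono_ae hu2_int (integrable_const (G^2)) (by
          filter_upwards [hGbd k] with ω h1
          exact pow_le_pow_left₀ (norm_nonneg _) h1 2)
        simpa [measure_univ] using h1
      calc ∫ ω, ‖g k ω‖^2 ∂μ
          = ∫ ω, (‖g k ω - gradient f (θ k ω)‖^2
              + 2*(inner ℝ (gradient f (θ k ω)) (g k ω - gradient f (θ k ω)) : ℝ)
              + ‖gradient f (θ k ω)‖^2) ∂μ := integral_congr_ae (Eventually.of_forall hexp)
        _ = (∫ ω, (‖g k ω - gradient f (θ k ω)‖^2
              + 2*(inner ℝ (gradient f (θ k ω)) (g k ω - gradient f (θ k ω)) : ℝ)) ∂μ)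
              + ∫ ω, ‖gradient f (θ k ω)‖^2 ∂μ :=
            integral_add (hw2_int.add (huw_int.const_mul 2)) hu2_int
        _ = (∫ ω, ‖g k ω - gradient f (θ k ω)‖^2 ∂μ)
              + (∫ ω, 2*(inner ℝ (gradient f (θ k ω)) (g k ω - gradient f (θ k ω)) : ℝ) ∂μ)
              + ∫ ω, ‖gradient f (θ k ω)‖^2 ∂μ := by
            rw [integral_add hw2_int (huw_int.const_mul 2)]
        _ ≤ σ2/b + G^2 := by
            rw [integral_const_mul, hcross]
            have := hvar k
            linarith [hint_u2]
    -- second moment bound for m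
    have hm2 : ∀ k, (∫ ω, ‖mp k ω‖^2 ∂μ ≤ σ2/b + G^2) ∧ (∫ ω, ‖m k ω‖^2 ∂μ ≤ σ2/b + G^2) := by
      have step : ∀ k, (∫ ω, ‖mp k ω‖^2 ∂μ ≤ σ2/b + G^2) → (∫ ω, ‖m k ω‖^2 ∂μ ≤ σ2/b + G^2) := by
        intro k hk
        have hpt : ∀ ω, ‖m k ω‖^2 ≤ β1c * ‖mp k ω‖^2 + (1-β1c) * ‖g k ω‖^2 := by
          intro ω
          have h1 : ‖m k ω‖ ≤ β1c*‖mp k ω‖ + (1-β1c)*‖g k ω‖ := by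
            rw [hmrec, hβ1const]
            calc ‖β1c • mp k ω + (1 - β1c) • g k ω‖
                ≤ ‖β1c • mp k ω‖ + ‖(1-β1c) • g k ω‖ := norm_add_le _ _
              _ = β1c * ‖mp k ω‖ + (1-β1c) * ‖g k ω‖ := by
                  rw [norm_smul, norm_smul, Real.norm_eq_abs, Real.norm_eq_abs,
                    abs_of_pos hβ1pos, abs_of_pos (by linarith)]
          nlinarith [mul_self_le_mul_self (norm_nonneg (m k ω)) h1,
            mul_nonneg (mul_nonneg hβ1pos.le (by linarith : (0:ℝ) ≤ 1-β1c))
              (sq_nonneg (‖mp k ω‖ - ‖g k ω‖)),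
            norm_nonneg (mp k ω), norm_nonneg (g k ω)]
        have hint := integral_mono_ae (f := fun ω => ‖m k ω‖^2)
          (g := fun ω => β1c * ‖mp k ω‖^2 + (1-β1c) * ‖g k ω‖^2) (hm2_int k)
          (((hmp2_int k).const_mul β1c).add ((hg2_int k).const_mul (1-β1c)))
          (Eventually.of_forall hpt)
        have heq : ∫ ω, (β1c * ‖mp k ω‖^2 + (1-β1c)*‖g k ω‖^2) ∂μ
            = β1c * ∫ ω, ‖mp k ω‖^2 ∂μ + (1-β1c) * ∫ ω, ‖g k ω‖^2 ∂μ := by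
          rw [integral_add ((hmp2_int k).const_mul β1c) ((hg2_int k).const_mul (1-β1c)),
            integral_const_mul, integral_const_mul]
        rw [heq] at hint
        nlinarith [mul_le_mul_of_nonneg_left hk hβ1pos.le,
          mul_le_mul_of_nonneg_left (hg2 k) (by linarith : (0:ℝ) ≤ 1-β1c)]
      intro k
      induction k with
      | zero =>
        have h0 : ∫ ω, ‖mp 0 ω‖^2 ∂μ ≤ σ2/b + G^2 := by
          have he : (fun ω => ‖mp 0 ω‖^2) = fun _ => (0:ℝ) := funext fun ω => by
            rw [hmp0]; simp
          rw [he, integral_zero]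
          exact hS0
        exact ⟨h0, step 0 h0⟩
      | succ k ih =>
        have h0 : ∫ ω, ‖mp (k+1) ω‖^2 ∂μ ≤ σ2/b + G^2 := by
          have he : mp (k+1) = m k := funext (hmpshift k)
          rw [he]; exact ih.2
        exact ⟨h0, step (k+1) h0⟩
    -- pointwise recursion in coordinates
    have hrecpt : ∀ k ω (i : Fin d), θ (k+1) ω i
        = θ k ω i - (α k / ((1 - β1c^(k+1)) * Real.sqrt (vhat k ω i))) * m k ω i := by
      intro k ω i
      have h1 : θ (k+1) ω i = θ k ω i + α k * dvec k ω i := by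
        rw [hθrec]
        simp [PiLp.add_apply, PiLp.smul_apply, smul_eq_mul]
      rw [h1, hdvec, hβ1const]
      generalize (1 - β1c^(k+1) : ℝ) = q
      ring
    have hM0 : 0 ≤ M := by
      obtain ⟨ω, hω⟩ := (hM 0).exists
      exact le_trans (sq_nonneg (g 0 ω ⟨0, hdpos⟩)) (hω ⟨0, hdpos⟩)
    have hDtil0 : 0 ≤ Dtil x := by
      obtain ⟨ω, hω⟩ := (hDtil x 1).exists
      exact le_trans (sq_nonneg _) (hω ⟨0, hdpos⟩)
    have hvM : ∀ k, ∀ᵐ ω ∂μ, ∀ i, v k ω i ≤ M := by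
      intro k
      induction k with
      | zero =>
        filter_upwards [hM 0] with ω hω i
        rw [hv0]
        nlinarith [hω i, sq_nonneg (g 0 ω i), hβ2_0 0, hβ2_1 0,
          mul_nonneg (hβ2_0 0) (sq_nonneg (g 0 ω i))]
      | succ k ih =>
        filter_upwards [ih, hM (k+1)] with ω h1 h2 i
        rw [hvrec]
        nlinarith [h1 i, h2 i, hβ2_0 (k+1), hβ2_1 (k+1),
          mul_nonneg (hβ2_0 (k+1)) (sub_nonneg.2 (h1 i)),
          mul_nonneg (sub_nonneg.2 (hβ2_1 (k+1)).le) (sub_nonneg.2 (h2 i))]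
    have haeall : ∀ᵐ ω ∂μ, (∀ k (i : Fin d), vstar ≤ v k ω i)
        ∧ (∀ k (i : Fin d), vhat k ω i ≤ vhat (k+1) ω i)
        ∧ (∀ k (i : Fin d), v k ω i ≤ M)
        ∧ (∀ k (i : Fin d), (θ k ω i - x i)^2 ≤ Dtil x) := by
      filter_upwards [ae_all_iff.2 hvstarle,
        ae_all_iff.2 (fun k => ae_all_iff.2 fun i => hmono k i),
        ae_all_iff.2 hvM, ae_all_iff.2 (fun k => hDtil x k)] with ω h1 h2 h3 h4
      exact ⟨h1, h2, h3, h4⟩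
    -- pointwise master inequality
    have hptwise : ∀ᵐ ω ∂μ, ∑ k ∈ Finset.Icc 1 K, (inner ℝ (θ k ω - x) (m k ω) : ℝ)
        ≤ (d:ℝ) * Dtil x * Real.sqrt M * (1 - β1c^(K+1)) / (2 * α K * Real.sqrt (1 - (β2 K)^(K+1)))
          + ∑ k ∈ Finset.Icc 1 K, (α k * Real.sqrt (1 - (β2 k)^(k+1)) / (2 * (1 - β1c^(k+1)) * Real.sqrt vstar)) * ∑ i, (m k ω i)^2 := by
      filter_upwards [haeall] with ω h
      obtain ⟨h1, h2, h3, h4⟩ := h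
      have hVlow : ∀ k (i : Fin d), vstar / (1 - (β2 k)^(k+1)) ≤ vhat k ω i := by
        intro k i
        rw [hvhat]
        exact div_le_div_of_nonneg_right (h1 k i) (hb2 k).le
      have hVtop : ∀ i : Fin d, vhat K ω i ≤ M / (1 - (β2 K)^(K+1)) := by
        intro i
        rw [hvhat]
        exact div_le_div_of_nonneg_right (h3 K i) (hb2 K).le
      have hmain := adam_master K hK (fun k i => θ k ω i) (fun k i => m k ω i)
        (fun k i => vhat k ω i) (fun i => x i) α β1c β2 (Dtil x) M vstar hαpos hαdec
        hβ1pos hβ1lt hβ2_0 hβ2_1 hvstar hDtil0 (fun k i => hrecpt k ω i)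
        hVlow (fun k i => h2 k i) hVtop (fun k i => h4 k i)
      have hin : ∀ k, (inner ℝ (θ k ω - x) (m k ω) : ℝ) = ∑ i, (θ k ω i - x i) * m k ω i := by
        intro k
        simp [PiLp.inner_apply, RCLike.inner_apply, PiLp.sub_apply]
        exact Finset.sum_congr rfl fun i _ => mul_comm _ _
      calc ∑ k ∈ Finset.Icc 1 K, (inner ℝ (θ k ω - x) (m k ω) : ℝ)
          = ∑ k ∈ Finset.Icc 1 K, ∑ i, (θ k ω i - x i) * m k ω i :=
            Finset.sum_congr rfl fun k _ => hin k
        _ ≤ _ := hmain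
    -- integrability of both sides
    have hinner_int : ∀ k, Integrable (fun ω => (inner ℝ (θ k ω - x) (m k ω) : ℝ)) μ := by
      intro k
      refine adam_integrable_of_bound (Measurable.aestronglyMeasurable ?_) (D x * B) ?_
      · exact ((hθmeas k).sub measurable_const).inner (hmeas k).2
      · filter_upwards [hDbd x k, (hmbd k).2] with ω hd' hm'
        rw [Real.norm_eq_abs]
        exact le_trans (abs_real_inner_le_norm _ _)
          (mul_le_mul hd' hm' (norm_nonneg _) (hDpos x).le)
    have hsum_sq_eq : ∀ k, (fun ω => ∑ i, (m k ω i)^2) = fun ω => ‖m k ω‖^2 :=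
      fun k => funext fun ω => adam_sum_sq (m k ω)
    have hsum_sq_int : ∀ k, Integrable (fun ω => ∑ i, (m k ω i)^2) μ := by
      intro k; rw [hsum_sq_eq k]; exact hm2_int k
    have hlhs_int : Integrable (fun ω => ∑ k ∈ Finset.Icc 1 K, (inner ℝ (θ k ω - x) (m k ω) : ℝ)) μ :=
      integrable_finset_sum _ (fun k _ => hinner_int k)
    have hrhs_int : Integrable (fun ω => (d:ℝ) * Dtil x * Real.sqrt M * (1 - β1c^(K+1)) / (2 * α K * Real.sqrt (1 - (β2 K)^(K+1)))
        + ∑ k ∈ Finset.Icc 1 K, (α k * Real.sqrt (1 - (β2 k)^(k+1)) / (2 * (1 - β1c^(k+1)) * Real.sqrt vstar)) * ∑ i, (m k ω i)^2) μ :=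
      (integrable_const _).add (integrable_finset_sum _ (fun k _ => (hsum_sq_int k).const_mul _))
    have hmono_int := integral_mono_ae hlhs_int hrhs_int hptwise
    have hrhs_eq : ∫ ω, ((d:ℝ) * Dtil x * Real.sqrt M * (1 - β1c^(K+1)) / (2 * α K * Real.sqrt (1 - (β2 K)^(K+1)))
        + ∑ k ∈ Finset.Icc 1 K, (α k * Real.sqrt (1 - (β2 k)^(k+1)) / (2 * (1 - β1c^(k+1)) * Real.sqrt vstar)) * ∑ i, (m k ω i)^2) ∂μ
        = (d:ℝ) * Dtil x * Real.sqrt M * (1 - β1c^(K+1)) / (2 * α K * Real.sqrt (1 - (β2 K)^(K+1)))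
          + ∑ k ∈ Finset.Icc 1 K, (α k * Real.sqrt (1 - (β2 k)^(k+1)) / (2 * (1 - β1c^(k+1)) * Real.sqrt vstar)) * ∫ ω, ∑ i, (m k ω i)^2 ∂μ := by
      rw [integral_add (integrable_const _) (integrable_finset_sum _ (fun k _ => (hsum_sq_int k).const_mul _)),
        integral_finset_sum _ (fun k _ => (hsum_sq_int k).const_mul _)]
      simp only [integral_const_mul, integral_const, probReal_univ, measure_univ, ENNReal.toReal_one, one_smul]
    have hLHS_sum : ∑ k ∈ Finset.Icc 1 K, ∫ ω, (inner ℝ (θ k ω - x) (m k ω) : ℝ) ∂μ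
        = ∫ ω, ∑ k ∈ Finset.Icc 1 K, (inner ℝ (θ k ω - x) (m k ω) : ℝ) ∂μ :=
      (integral_finset_sum _ (fun k _ => hinner_int k)).symm
    have hm2int_bound : ∀ k ∈ Finset.Icc 1 K,
        (α k * Real.sqrt (1 - (β2 k)^(k+1)) / (2 * (1 - β1c^(k+1)) * Real.sqrt vstar)) * ∫ ω, ∑ i, (m k ω i)^2 ∂μ
        ≤ (α k * Real.sqrt (1 - (β2 k)^(k+1)) / (2 * (1 - β1c^(k+1)) * Real.sqrt vstar)) * (σ2/b + G^2) := by
      intro k _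
      refine mul_le_mul_of_nonneg_left ?_ ?_
      · rw [hsum_sq_eq k]
        exact (hm2 k).2
      · refine div_nonneg (mul_nonneg (hαpos k).le (Real.sqrt_nonneg _)) ?_
        have := hb1 k
        have := Real.sqrt_nonneg vstar
        nlinarith [mul_nonneg (hb1 k).le (Real.sqrt_nonneg vstar)]
    have hfinal : ∑ k ∈ Finset.Icc 1 K, ∫ ω, (inner ℝ (θ k ω - x) (m k ω) : ℝ) ∂μ
        ≤ (d:ℝ) * Dtil x * Real.sqrt M * (1 - β1c^(K+1)) / (2 * α K * Real.sqrt (1 - (β2 K)^(K+1)))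
          + ∑ k ∈ Finset.Icc 1 K, (α k * Real.sqrt (1 - (β2 k)^(k+1)) / (2 * (1 - β1c^(k+1)) * Real.sqrt vstar)) * (σ2/b + G^2) := by
      rw [hLHS_sum]
      refine le_trans hmono_int ?_
      rw [hrhs_eq]
      exact add_le_add_right (Finset.sum_le_sum hm2int_bound) _
    -- final arithmetic
    have hC1 : 0 ≤ (d:ℝ) * Dtil x * Real.sqrt M * (1 - β1c^(K+1)) / (2 * α K * Real.sqrt (1 - (β2 K)^(K+1))) := by
      refine div_nonneg ?_ (mul_nonneg (by linarith [hαpos K]) (Real.sqrt_nonneg _))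
      exact mul_nonneg (mul_nonneg (mul_nonneg (Nat.cast_nonneg d) hDtil0) (Real.sqrt_nonneg _)) (hb1 K).le
    have hstep1 : (1/(K:ℝ)) * ((d:ℝ) * Dtil x * Real.sqrt M * (1 - β1c^(K+1)) / (2 * α K * Real.sqrt (1 - (β2 K)^(K+1))))
        ≤ (d:ℝ) * Dtil x * Real.sqrt M * (1 - β1c ^ (K+1)) / (2 * β1c * α K * Real.sqrt (1 - (β2 K) ^ (K+1)) * (K:ℝ)) := by
      have e1 : (d:ℝ) * Dtil x * Real.sqrt M * (1 - β1c ^ (K+1)) / (2 * β1c * α K * Real.sqrt (1 - (β2 K) ^ (K+1)) * (K:ℝ))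
          = ((d:ℝ) * Dtil x * Real.sqrt M * (1 - β1c^(K+1)) / (2 * α K * Real.sqrt (1 - (β2 K)^(K+1)))) / (β1c * (K:ℝ)) := by
        ring
      have e2 : (1/(K:ℝ)) * ((d:ℝ) * Dtil x * Real.sqrt M * (1 - β1c^(K+1)) / (2 * α K * Real.sqrt (1 - (β2 K)^(K+1))))
          = ((d:ℝ) * Dtil x * Real.sqrt M * (1 - β1c^(K+1)) / (2 * α K * Real.sqrt (1 - (β2 K)^(K+1)))) / (K:ℝ) := by
        ring
      rw [e1, e2, div_le_div_iff₀ hKpos (mul_pos hβ1pos hKpos)]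
      have h3 : β1c * (K:ℝ) ≤ (K:ℝ) := by nlinarith
      exact mul_le_mul_of_nonneg_left h3 hC1
    have hstep2 : (1/(K:ℝ)) * (∑ k ∈ Finset.Icc 1 K, (α k * Real.sqrt (1 - (β2 k)^(k+1)) / (2 * (1 - β1c^(k+1)) * Real.sqrt vstar)) * (σ2/b + G^2))
        ≤ (σ2 / b + G ^ 2) / (2 * Real.sqrt vstar * β1c * (1 - β1c) * (K:ℝ)) * ∑ k ∈ Finset.Icc 1 K, α k * Real.sqrt (1 - (β2 k) ^ (k+1)) := by
      rw [Finset.mul_sum, Finset.mul_sum]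
      refine Finset.sum_le_sum fun k _ => ?_
      have hq : β1c * (1 - β1c) ≤ 1 - β1c^(k+1) := by
        have h1 : β1c^(k+1) ≤ β1c := by
          calc β1c^(k+1) ≤ β1c^1 := pow_le_pow_of_le_one hβ1pos.le hβ1lt.le (by omega)
            _ = β1c := pow_one _
        nlinarith
      have hvs : (0:ℝ) < Real.sqrt vstar := Real.sqrt_pos.2 hvstar
      have hp0 : (0:ℝ) ≤ α k * Real.sqrt (1 - (β2 k)^(k+1)) :=
        mul_nonneg (hαpos k).le (Real.sqrt_nonneg _)
      have e1 : (1/(K:ℝ)) * ((α k * Real.sqrt (1 - (β2 k)^(k+1)) / (2 * (1 - β1c^(k+1)) * Real.sqrt vstar)) * (σ2/b + G^2))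
          = ((σ2/b+G^2) * (α k * Real.sqrt (1 - (β2 k)^(k+1))) / (2 * Real.sqrt vstar * (K:ℝ))) * (1 - β1c^(k+1))⁻¹ := by
        generalize (1 - β1c^(k+1) : ℝ) = q
        ring
      have e2 : (σ2 / b + G ^ 2) / (2 * Real.sqrt vstar * β1c * (1 - β1c) * (K:ℝ)) * (α k * Real.sqrt (1 - (β2 k) ^ (k+1)))
          = ((σ2/b+G^2) * (α k * Real.sqrt (1 - (β2 k)^(k+1))) / (2 * Real.sqrt vstar * (K:ℝ))) * (β1c * (1 - β1c))⁻¹ := by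
        generalize (1 - β1c : ℝ) = u
        ring
      rw [e1, e2]
      refine mul_le_mul_of_nonneg_left ?_ ?_
      · exact inv_anti₀ (by nlinarith) hq
      · exact div_nonneg (mul_nonneg hS0 hp0) (by positivity)
    calc (1 / (K:ℝ)) * ∑ k ∈ Finset.Icc 1 K, ∫ ω, (inner ℝ (θ k ω - x) (m k ω) : ℝ) ∂μ
        ≤ (1/(K:ℝ)) * ((d:ℝ) * Dtil x * Real.sqrt M * (1 - β1c^(K+1)) / (2 * α K * Real.sqrt (1 - (β2 K)^(K+1)))
          + ∑ k ∈ Finset.Icc 1 K, (α k * Real.sqrt (1 - (β2 k)^(k+1)) / (2 * (1 - β1c^(k+1)) * Real.sqrt vstar)) * (σ2/b + G^2)) :=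
          mul_le_mul_of_nonneg_left hfinal (by positivity)
      _ = (1/(K:ℝ)) * ((d:ℝ) * Dtil x * Real.sqrt M * (1 - β1c^(K+1)) / (2 * α K * Real.sqrt (1 - (β2 K)^(K+1))))
          + (1/(K:ℝ)) * (∑ k ∈ Finset.Icc 1 K, (α k * Real.sqrt (1 - (β2 k)^(k+1)) / (2 * (1 - β1c^(k+1)) * Real.sqrt vstar)) * (σ2/b + G^2)) := by
          ring
      _ ≤ (d:ℝ) * Dtil x * Real.sqrt M * (1 - β1c ^ (K+1)) / (2 * β1c * α K * Real.sqrt (1 - (β2 K) ^ (K+1)) * (K:ℝ))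
          + (σ2 / b + G ^ 2) / (2 * Real.sqrt vstar * β1c * (1 - β1c) * (K:ℝ)) * ∑ k ∈ Finset.Icc 1 K, α k * Real.sqrt (1 - (β2 k) ^ (k+1)) :=
          add_le_add hstep1 hstep2
      _ ≤ _ := by linarith [hT3, hT4]
end

section
/- (Transfer from m_k to the full gradient) For Adam, under assumptions (S1)-(S3) and (A1)-(A2), for all k ∈ ℕ and all θ ∈ ℝ^d: E[(θ_k − θ)ᵀ ∇f(θ_k)] ≤ E[(θ_k − θ)ᵀ m_k] + (1/β_{1k} + (1 − β_{1k})) D(θ)(B + √(σ²/b + G²)). -/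
open MeasureTheory Filter Real

theorem adam_transfer_to_full_gradient
    {Ω : Type*} [MeasurableSpace Ω] (μ : Measure Ω) [IsProbabilityMeasure μ]
    {d : ℕ} (f : EuclideanSpace ℝ (Fin d) → ℝ)
    (θ m mp v g dvec : ℕ → Ω → EuclideanSpace ℝ (Fin d))
    (vhat : ℕ → Ω → Fin d → ℝ)
    (α β1 β2 : ℕ → ℝ)
    (σ2 b G B : ℝ)
    (D : EuclideanSpace ℝ (Fin d) → ℝ)
    (hf : ContDiff ℝ 1 f)
    (hb : 0 < b) (hσ2 : 0 ≤ σ2) (hG : 0 < G) (hB : 0 < B)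
    (hαpos : ∀ k, 0 < α k)
    (hβ1mem : ∀ k, β1 k ∈ Set.Ioo (0:ℝ) 1) (hβ2mem : ∀ k, β2 k ∈ Set.Ico (0:ℝ) 1)
    (hmp0 : ∀ ω, mp 0 ω = 0)
    (hmrec : ∀ k ω, m k ω = β1 k • mp k ω + (1 - β1 k) • g k ω)
    (hmpshift : ∀ k ω, mp (k+1) ω = m k ω)
    (hv0 : ∀ ω (i : Fin d), v 0 ω i = (1 - β2 0) * (g 0 ω i) ^ 2)
    (hvrec : ∀ k ω (i : Fin d), v (k+1) ω i = β2 (k+1) * v k ω i + (1 - β2 (k+1)) * (g (k+1) ω i) ^ 2)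
    (hvhat : ∀ k ω (i : Fin d), vhat k ω i = v k ω i / (1 - (β2 k) ^ (k+1)))
    (hdvec : ∀ k ω (i : Fin d), dvec k ω i = -(m k ω i / (1 - (β1 k) ^ (k+1))) / Real.sqrt (vhat k ω i))
    (hθrec : ∀ k ω, θ (k+1) ω = θ k ω + α k • dvec k ω)
    (hθmeas : ∀ k, Measurable (θ k)) (hgmeas : ∀ k, Measurable (g k))
    (hunbiased : ∀ k, μ[g k | MeasurableSpace.comap (θ k) inferInstance]
        =ᵐ[μ] fun ω => gradient f (θ k ω))
    (hvar : ∀ k, ∫ ω, ‖g k ω - gradient f (θ k ω)‖ ^ 2 ∂μ ≤ σ2 / b)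
    (hGbd : ∀ k, ∀ᵐ ω ∂μ, ‖gradient f (θ k ω)‖ ≤ G)
    (hBbd : ∀ k, ∀ᵐ ω ∂μ, ‖g k ω‖ ≤ B)
    (hDpos : ∀ x, 0 < D x)
    (hDbd : ∀ x k, ∀ᵐ ω ∂μ, ‖θ k ω - x‖ ≤ D x)
    :
    ∀ (k : ℕ) (x : EuclideanSpace ℝ (Fin d)),
      ∫ ω, (inner ℝ (θ k ω - x) (gradient f (θ k ω)) : ℝ) ∂μ ≤
        ∫ ω, (inner ℝ (θ k ω - x) (m k ω) : ℝ) ∂μ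
        + (1 / β1 k + (1 - β1 k)) * D x * (B + Real.sqrt (σ2 / b + G ^ 2)) := by

  intro k x
  -- measurability of m and mp
  have hmmeas : ∀ n, Measurable (m n) ∧ Measurable (mp n) := by
    intro n
    induction n with
    | zero =>
      have hmp : Measurable (mp 0) := by
        have h : mp 0 = fun _ => 0 := funext hmp0
        rw [h]; exact measurable_const
      refine ⟨?_, hmp⟩
      have h : m 0 = fun ω => β1 0 • mp 0 ω + (1 - β1 0) • g 0 ω := funext (hmrec 0)
      rw [h]
      exact (hmp.const_smul (β1 0)).add ((hgmeas 0).const_smul (1 - β1 0))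
    | succ n ih =>
      have hmp : Measurable (mp (n+1)) := by
        have h : mp (n+1) = m n := funext (hmpshift n)
        rw [h]; exact ih.1
      refine ⟨?_, hmp⟩
      have h : m (n+1) = fun ω => β1 (n+1) • mp (n+1) ω + (1 - β1 (n+1)) • g (n+1) ω :=
        funext (hmrec (n+1))
      rw [h]
      exact (hmp.const_smul (β1 (n+1))).add ((hgmeas (n+1)).const_smul (1 - β1 (n+1)))
  -- a.e. bound on m
  have key : ∀ n, (∀ᵐ ω ∂μ, ‖mp n ω‖ ≤ B) → (∀ᵐ ω ∂μ, ‖m n ω‖ ≤ B) := by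
    intro n hmpbd
    filter_upwards [hmpbd, hBbd n] with ω h1 h2
    have hβ := hβ1mem n
    rw [hmrec n ω]
    calc ‖β1 n • mp n ω + (1 - β1 n) • g n ω‖
        ≤ ‖β1 n • mp n ω‖ + ‖(1 - β1 n) • g n ω‖ := norm_add_le _ _
      _ = β1 n * ‖mp n ω‖ + (1 - β1 n) * ‖g n ω‖ := by
          rw [norm_smul, norm_smul, Real.norm_eq_abs, Real.norm_eq_abs,
            abs_of_pos hβ.1, abs_of_nonneg (by linarith [hβ.2] : (0:ℝ) ≤ 1 - β1 n)]
      _ ≤ β1 n * B + (1 - β1 n) * B := by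
          have h1' := hβ.1.le
          have h2' : (0:ℝ) ≤ 1 - β1 n := by linarith [hβ.2]
          gcongr
      _ = B := by ring
  have hmbd : ∀ n, ∀ᵐ ω ∂μ, ‖m n ω‖ ≤ B := by
    intro n
    induction n with
    | zero =>
      exact key 0 (Filter.Eventually.of_forall (fun ω => by simp [hmp0 ω, hB.le]))
    | succ n ih =>
      refine key (n+1) ?_
      filter_upwards [ih] with ω h
      rw [hmpshift n ω]; exact h
  -- continuity of gradient
  have hgradcont : Continuous (gradient f) := by
    have h : gradient f = fun y => (InnerProductSpace.toDual ℝ _).symm (fderiv ℝ f y) := rfl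
    rw [h]
    exact (InnerProductSpace.toDual ℝ _).symm.continuous.comp (hf.continuous_fderiv one_ne_zero)
  set A : Ω → ℝ := fun ω => inner ℝ (θ k ω - x) (gradient f (θ k ω)) with hA
  set C : Ω → ℝ := fun ω => inner ℝ (θ k ω - x) (m k ω) with hC
  have hAmeas : Measurable A :=
    ((hθmeas k).sub measurable_const).inner (hgradcont.measurable.comp (hθmeas k))
  have hCmeas : Measurable C := ((hθmeas k).sub measurable_const).inner (hmmeas k).1
  have hDnn : (0:ℝ) ≤ D x := (hDpos x).le
  have hIA : Integrable A μ := by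
    refine (integrable_const (D x * G)).mono' hAmeas.aestronglyMeasurable ?_
    filter_upwards [hDbd x k, hGbd k] with ω h1 h2
    rw [Real.norm_eq_abs]
    calc |A ω| ≤ ‖θ k ω - x‖ * ‖gradient f (θ k ω)‖ := abs_real_inner_le_norm _ _
      _ ≤ D x * G := mul_le_mul h1 h2 (norm_nonneg _) hDnn
  have hIC : Integrable C μ := by
    refine (integrable_const (D x * B)).mono' hCmeas.aestronglyMeasurable ?_
    filter_upwards [hDbd x k, hmbd k] with ω h1 h2
    rw [Real.norm_eq_abs]
    calc |C ω| ≤ ‖θ k ω - x‖ * ‖m k ω‖ := abs_real_inner_le_norm _ _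
      _ ≤ D x * B := mul_le_mul h1 h2 (norm_nonneg _) hDnn
  have hpt : ∀ᵐ ω ∂μ, A ω - C ω ≤ D x * (G + B) := by
    filter_upwards [hDbd x k, hGbd k, hmbd k] with ω h1 h2 h3
    have e1 : A ω - C ω = inner ℝ (θ k ω - x) (gradient f (θ k ω) - m k ω) := by
      simp [hA, hC, inner_sub_right]
    rw [e1]
    calc (inner ℝ (θ k ω - x) (gradient f (θ k ω) - m k ω) : ℝ)
        ≤ ‖θ k ω - x‖ * ‖gradient f (θ k ω) - m k ω‖ := real_inner_le_norm _ _
      _ ≤ D x * (G + B) := by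
          have h4 : ‖gradient f (θ k ω) - m k ω‖ ≤ G + B := by
            calc ‖gradient f (θ k ω) - m k ω‖ ≤ ‖gradient f (θ k ω)‖ + ‖m k ω‖ :=
              norm_sub_le _ _
              _ ≤ G + B := add_le_add h2 h3
          exact mul_le_mul h1 h4 (norm_nonneg _) hDnn
  have hdiff : ∫ ω, (A ω - C ω) ∂μ ≤ D x * (G + B) := by
    have h := integral_mono_ae (hIA.sub hIC) (integrable_const (D x * (G + B))) hpt
    simpa using h
  rw [integral_sub hIA hIC] at hdiff
  have hGsq : G ≤ Real.sqrt (σ2 / b + G ^ 2) := by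
    have h1 := Real.sqrt_le_sqrt (show G ^ 2 ≤ σ2 / b + G ^ 2 by
      have := div_nonneg hσ2 hb.le; linarith)
    rwa [Real.sqrt_sq hG.le] at h1
  have hcoef : (1:ℝ) ≤ 1 / β1 k + (1 - β1 k) := by
    have hβ := hβ1mem k
    have h1 : (1:ℝ) ≤ 1 / β1 k := by
      rw [le_div_iff₀ hβ.1]; linarith [hβ.2]
    linarith [hβ.2]
  have hconst : D x * (G + B) ≤ (1 / β1 k + (1 - β1 k)) * D x * (B + Real.sqrt (σ2 / b + G ^ 2)) := by
    have h1 : D x * (G + B) ≤ 1 * D x * (B + Real.sqrt (σ2 / b + G ^ 2)) := by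
      nlinarith
    have h2 : 1 * D x * (B + Real.sqrt (σ2 / b + G ^ 2)) ≤
        (1 / β1 k + (1 - β1 k)) * D x * (B + Real.sqrt (σ2 / b + G ^ 2)) := by
      have hpos : (0:ℝ) ≤ B + Real.sqrt (σ2 / b + G ^ 2) := by
        have := Real.sqrt_nonneg (σ2 / b + G ^ 2); linarith
      exact mul_le_mul_of_nonneg_right (mul_le_mul_of_nonneg_right hcoef hDnn) hpos
    linarith
  linarith
end
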